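/- arXiv:1406.6725 — 9 statements merged into one kernel-verified Lean document; each statement's English description precedes it below -/
import Mathlib

section
/- Let X be a separable real Banach space that contains an isomorphic copy of ℓ¹ (i.e., there exist a continuous linear map T : ℓ¹(ℕ;ℝ) → X and a constant c > 0 such that ‖Tx‖ ≥ c‖x‖ for all x). Then there exists μ ∈ X** such that the singleton {μ}, a norm-compact convex subset of X**, is not representable: there is no nested sequence (C_n) of nonempty bounded closed convex subsets of X with {μ} = ⋂_{n∈ℕ} cl_{w*}(J(C_n)). -/
open NormedSpace Filter Topology

/-- The weak*-closure of a subset of the bidual `X** = StrongDual ℝ (StrongDual ℝ X)`. -/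
noncomputable def wClosure {X : Type*} [NormedAddCommGroup X] [NormedSpace ℝ X]
    (S : Set (StrongDual ℝ (StrongDual ℝ X))) :
    Set (StrongDual ℝ (StrongDual ℝ X)) :=
  ⇑StrongDual.toWeakDual ⁻¹' closure (⇑StrongDual.toWeakDual '' S)

namespace NotRep

open Set

attribute [local instance] Classical.propDecidable

abbrev II : Type := Finset ℕ × Finset (Finset ℕ)

open Classical in
/-- An independent family of subsets of `II`, indexed by `Set ℕ` (a set of size continuum). -/
noncomputable def AA (S : Set ℕ) : Set II := {p | p.1.filter (fun n => n ∈ S) ∈ p.2}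

open Classical in
noncomputable def BB (𝒮 : Set (Set ℕ)) (S : Set ℕ) : Set II :=
  if S ∈ 𝒮 then AA S else (AA S)ᶜ

open Classical in
lemma indep (𝒮 : Set (Set ℕ)) (t : Set (Set ℕ)) (ht : t.Finite) :
    (⋂ S ∈ t, BB 𝒮 S).Nonempty := by
  let F : Finset (Set ℕ) := ht.toFinset
  -- separators for distinct pairs
  have hsep : ∀ S S' : Set ℕ, S ≠ S' → ∃ n : ℕ, ¬ (n ∈ S ↔ n ∈ S') := by
    intro S S' hne
    by_contra h
    push_neg at h
    exact hne (Set.ext h)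
  choose sep hsepp using hsep
  let s : Finset ℕ := F.biUnion fun S => F.biUnion fun S' =>
    if h : S ≠ S' then {sep S S' h} else ∅
  let c : Set ℕ → Finset ℕ := fun S => s.filter (fun n => n ∈ S)
  have hcinj : ∀ S ∈ F, ∀ S' ∈ F, S ≠ S' → c S ≠ c S' := by
    intro S hS S' hS' hne hceq
    have hmem : sep S S' hne ∈ s := by
      apply Finset.mem_biUnion.2 ⟨S, hS, _⟩
      apply Finset.mem_biUnion.2 ⟨S', hS', _⟩
      rw [dif_pos hne]
      exact Finset.mem_singleton_self _
    have := hsepp S S' hne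
    apply this
    constructor
    · intro hn
      have : sep S S' hne ∈ c S := Finset.mem_filter.2 ⟨hmem, hn⟩
      rw [hceq] at this
      exact (Finset.mem_filter.1 this).2
    · intro hn
      have : sep S S' hne ∈ c S' := Finset.mem_filter.2 ⟨hmem, hn⟩
      rw [← hceq] at this
      exact (Finset.mem_filter.1 this).2
  refine ⟨(s, (F.filter (fun S => S ∈ 𝒮)).image c), ?_⟩
  simp only [Set.mem_iInter]
  intro S hS
  have hSF : S ∈ F := ht.mem_toFinset.2 hS
  unfold BB
  split_ifs with h𝒮
  · -- S ∈ 𝒮 : need membership in AA S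
    show (Finset.filter (fun n => n ∈ S) s) ∈ (F.filter (fun S => S ∈ 𝒮)).image c
    exact Finset.mem_image.2 ⟨S, Finset.mem_filter.2 ⟨hSF, h𝒮⟩, rfl⟩
  · -- S ∉ 𝒮 : complement
    show ¬ ((Finset.filter (fun n => n ∈ S) s) ∈ (F.filter (fun S => S ∈ 𝒮)).image c)
    intro hmem
    obtain ⟨S', hS', hcc⟩ := Finset.mem_image.1 hmem
    obtain ⟨hS'F, hS'𝒮⟩ := Finset.mem_filter.1 hS'
    have hne : S' ≠ S := fun h => h𝒮 (h ▸ hS'𝒮)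
    exact hcinj S' hS'F S hSF hne hcc

noncomputable def baseFilter (𝒮 : Set (Set ℕ)) : Filter II := ⨅ S : Set ℕ, 𝓟 (BB 𝒮 S)

instance baseFilter_neBot (𝒮 : Set (Set ℕ)) : (baseFilter 𝒮).NeBot := by
  show (⨅ S : Set ℕ, 𝓟 (BB 𝒮 S)).NeBot
  rw [(Filter.hasBasis_iInf_principal_finite _).neBot_iff]
  intro t ht
  exact indep 𝒮 t ht

noncomputable def USet (𝒮 : Set (Set ℕ)) : Ultrafilter II := Ultrafilter.of (baseFilter 𝒮)

lemma BB_mem_USet (𝒮 : Set (Set ℕ)) (S : Set ℕ) : BB 𝒮 S ∈ USet 𝒮 := by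
  have h1 : baseFilter 𝒮 ≤ 𝓟 (BB 𝒮 S) := iInf_le (fun S => 𝓟 (BB 𝒮 S)) S
  exact Ultrafilter.of_le (baseFilter 𝒮) (le_principal_iff.1 h1)

lemma mem_USet {𝒮 : Set (Set ℕ)} {S : Set ℕ} : AA S ∈ USet 𝒮 ↔ S ∈ 𝒮 := by
  constructor
  · intro h
    by_contra h𝒮
    have := BB_mem_USet 𝒮 S
    rw [BB, if_neg h𝒮] at this
    exact (Ultrafilter.compl_mem_iff_notMem.1 this) h
  · intro h𝒮
    have := BB_mem_USet 𝒮 S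
    rwa [BB, if_pos h𝒮] at this


/-! ### ℓ¹ machinery -/

noncomputable def ee (n : ℕ) : lp (fun _ : ℕ => ℝ) 1 := lp.single 1 n 1

lemma norm_ee (n : ℕ) : ‖ee n‖ = 1 := by
  have := lp.norm_single (p := 1) (E := fun _ : ℕ => ℝ) (by norm_num) n (1 : ℝ)
  exact this.trans norm_one

lemma ee_apply_self (n : ℕ) : (ee n : ∀ _ : ℕ, ℝ) n = 1 := lp.single_apply_self 1 n 1

lemma ee_apply_ne {n m : ℕ} (h : m ≠ n) : (ee n : ∀ _ : ℕ, ℝ) m = 0 :=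
  lp.single_apply_ne 1 n 1 h

lemma summable_norm (y : lp (fun _ : ℕ => ℝ) 1) : Summable fun n => ‖y n‖ := by
  have := (lp.memℓp y).summable (p := 1) (by norm_num)
  simpa using this

lemma norm_lp_eq (y : lp (fun _ : ℕ => ℝ) 1) : ‖y‖ = ∑' n, ‖y n‖ := by
  have := lp.norm_eq_tsum_rpow (p := 1) (by norm_num) y
  simpa using this

lemma exists_psi (N : Set ℕ) : ∃ ψ : StrongDual ℝ (lp (fun _ : ℕ => ℝ) 1),
    ∀ n : ℕ, ψ (ee n) = if n ∈ N then 1 else 0 := by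
  have hsum' : ∀ y : lp (fun _ : ℕ => ℝ) 1,
      Summable fun n => ‖if n ∈ N then y n else 0‖ := by
    intro y
    apply Summable.of_norm_bounded (summable_norm y)
    intro n
    by_cases h : n ∈ N <;> simp [h]
  have hsum : ∀ y : lp (fun _ : ℕ => ℝ) 1,
      Summable fun n => if n ∈ N then y n else 0 := fun y => (hsum' y).of_norm
  let φ : lp (fun _ : ℕ => ℝ) 1 →ₗ[ℝ] ℝ :=
    { toFun := fun y => ∑' n, if n ∈ N then y n else 0
      map_add' := by
        intro y z
        show (∑' n, if n ∈ N then (y + z) n else 0) =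
          (∑' n, if n ∈ N then y n else 0) + (∑' n, if n ∈ N then z n else 0)
        have hfe : (fun n => if n ∈ N then (y + z) n else 0) =
            fun n => (if n ∈ N then y n else 0) + (if n ∈ N then z n else 0) := by
          funext n
          by_cases h : n ∈ N <;> simp [h, lp.coeFn_add]
        rw [hfe, Summable.tsum_add (hsum y) (hsum z)]
      map_smul' := by
        intro r y
        show (∑' n, if n ∈ N then (r • y) n else 0) =
          (RingHom.id ℝ) r • ∑' n, if n ∈ N then y n else 0
        have hfe : (fun n => if n ∈ N then (r • y) n else 0) =
            fun n => r * (if n ∈ N then y n else 0) := by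
          funext n
          by_cases h : n ∈ N <;> simp [h, lp.coeFn_smul, smul_eq_mul]
        rw [hfe, tsum_mul_left]
        simp [smul_eq_mul] }
  have hbound : ∀ y : lp (fun _ : ℕ => ℝ) 1, ‖φ y‖ ≤ 1 * ‖y‖ := by
    intro y
    rw [one_mul, norm_lp_eq]
    calc ‖∑' n, if n ∈ N then y n else 0‖
        ≤ ∑' n, ‖if n ∈ N then y n else 0‖ := norm_tsum_le_tsum_norm (hsum' y)
      _ ≤ ∑' n, ‖y n‖ := by
          apply Summable.tsum_le_tsum _ (hsum' y) (summable_norm y)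
          intro n
          by_cases h : n ∈ N <;> simp [h]
  refine ⟨φ.mkContinuous 1 hbound, ?_⟩
  intro n
  show (∑' m, if m ∈ N then (ee n : ∀ _ : ℕ, ℝ) m else 0) = _
  rw [tsum_eq_single n]
  · by_cases h : n ∈ N <;> simp [h, ee_apply_self]
  · intro m hm
    rw [ee_apply_ne hm]
    simp

section WithT
variable {X : Type*} [NormedAddCommGroup X] [NormedSpace ℝ X]
variable (T : lp (fun _ : ℕ => ℝ) 1 →L[ℝ] X)

lemma T_injective {c : ℝ} (hc : 0 < c) (hT : ∀ y, c * ‖y‖ ≤ ‖T y‖) :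
    Function.Injective T := by
  intro y z h
  have h0 : T (y - z) = 0 := by rw [map_sub, h, sub_self]
  have h1 := hT (y - z)
  rw [h0, norm_zero] at h1
  have h2 : ‖y - z‖ ≤ 0 := by nlinarith [norm_nonneg (y - z)]
  rwa [← sub_eq_zero, ← norm_le_zero_iff]

lemma exists_dual {c : ℝ} (hc : 0 < c) (hT : ∀ y, c * ‖y‖ ≤ ‖T y‖) (N : Set ℕ) :
    ∃ g : StrongDual ℝ X, ∀ n : ℕ, g (T (ee n)) = if n ∈ N then 1 else 0 := by
  obtain ⟨ψ, hψ⟩ := exists_psi N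
  have hinj : Function.Injective (T : lp (fun _ : ℕ => ℝ) 1 →ₗ[ℝ] X) :=
    T_injective T hc hT
  let p : Subspace ℝ X := LinearMap.range (T : lp (fun _ : ℕ => ℝ) 1 →ₗ[ℝ] X)
  let eqv : lp (fun _ : ℕ => ℝ) 1 ≃ₗ[ℝ] p := LinearEquiv.ofInjective _ hinj
  have heqv : ∀ y, ((eqv y : p) : X) = T y := fun y => rfl
  let f₀ : p →ₗ[ℝ] ℝ := ψ.toLinearMap.comp eqv.symm.toLinearMap
  have hbound : ∀ z : p, ‖f₀ z‖ ≤ (‖ψ‖ / c) * ‖z‖ := by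
    intro z
    set y := eqv.symm z with hy
    have hTy : T y = (z : X) := by
      rw [← heqv y, hy, LinearEquiv.apply_symm_apply]
    have h2 : c * ‖y‖ ≤ ‖z‖ := by
      rw [show ‖z‖ = ‖(z : X)‖ from rfl, ← hTy]; exact hT y
    have h3 : ‖y‖ ≤ ‖z‖ / c := by rw [le_div_iff₀ hc]; linarith
    calc ‖f₀ z‖ ≤ ‖ψ‖ * ‖y‖ := ψ.le_opNorm y
      _ ≤ ‖ψ‖ * (‖z‖ / c) := mul_le_mul_of_nonneg_left h3 (norm_nonneg ψ)
      _ = (‖ψ‖ / c) * ‖z‖ := by ring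
  let f : p →L[ℝ] ℝ := f₀.mkContinuous (‖ψ‖ / c) hbound
  obtain ⟨g, hg, -⟩ := exists_extension_norm_eq p f
  refine ⟨g, fun n => ?_⟩
  have hmem : T (ee n) ∈ p := ⟨ee n, rfl⟩
  have h4 : eqv.symm ⟨T (ee n), hmem⟩ = ee n := by
    apply eqv.injective
    rw [LinearEquiv.apply_symm_apply]
    exact Subtype.ext rfl
  calc g (T (ee n)) = f ⟨T (ee n), hmem⟩ := hg ⟨T (ee n), hmem⟩
    _ = ψ (eqv.symm ⟨T (ee n), hmem⟩) := rfl
    _ = ψ (ee n) := by rw [h4]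
    _ = if n ∈ N then 1 else 0 := hψ n

/-! ### Ultrafilter-limit functionals -/

noncomputable def seqf (g : StrongDual ℝ X) : II → ℝ :=
  fun i => g (T (ee (Encodable.encode i)))

lemma seqf_bound (g : StrongDual ℝ X) (i : II) : ‖seqf T g i‖ ≤ ‖g‖ * ‖T‖ := by
  calc ‖seqf T g i‖ ≤ ‖g‖ * ‖T (ee (Encodable.encode i))‖ := g.le_opNorm _
    _ ≤ ‖g‖ * (‖T‖ * ‖ee (Encodable.encode i)‖) :=
        mul_le_mul_of_nonneg_left (T.le_opNorm _) (norm_nonneg g)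
    _ = ‖g‖ * ‖T‖ := by rw [norm_ee, mul_one]

lemma exists_tendsto (U : Ultrafilter II) (g : StrongDual ℝ X) :
    ∃ a, Tendsto (seqf T g) (U : Filter II) (𝓝 a) := by
  set M := ‖g‖ * ‖T‖ with hM
  have hmem : ∀ i, seqf T g i ∈ Set.Icc (-M) M := by
    intro i
    have h1 := seqf_bound T g i
    rw [Real.norm_eq_abs, abs_le] at h1
    exact h1
  obtain ⟨a, -, ha⟩ := (isCompact_Icc (a := -M) (b := M)).ultrafilter_le_nhds
    (U.map (seqf T g)) (by
      rw [le_principal_iff]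
      exact Ultrafilter.mem_map.2 (Filter.univ_mem' hmem))
  exact ⟨a, ha⟩

lemma tendsto_limUnder (U : Ultrafilter II) (g : StrongDual ℝ X) :
    Tendsto (seqf T g) (U : Filter II) (𝓝 (limUnder (U : Filter II) (seqf T g))) :=
  tendsto_nhds_limUnder (exists_tendsto T U g)

noncomputable def muU (U : Ultrafilter II) : StrongDual ℝ (StrongDual ℝ X) :=
  LinearMap.mkContinuous
    { toFun := fun g => limUnder (U : Filter II) (seqf T g)
      map_add' := by
        intro g₁ g₂
        refine tendsto_nhds_unique (tendsto_limUnder T U (g₁ + g₂)) ?_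
        exact (tendsto_limUnder T U g₁).add (tendsto_limUnder T U g₂)
      map_smul' := by
        intro r g
        refine tendsto_nhds_unique (tendsto_limUnder T U (r • g)) ?_
        exact (tendsto_limUnder T U g).const_mul r }
    ‖T‖
    (by
      intro g
      have h := (tendsto_limUnder T U g).norm
      have hb : ∀ i, ‖seqf T g i‖ ≤ ‖g‖ * ‖T‖ := seqf_bound T g
      have h2 := le_of_tendsto h (Filter.Eventually.of_forall hb)
      simpa [mul_comm] using h2)

lemma muU_apply (U : Ultrafilter II) (g : StrongDual ℝ X) :
    muU T U g = limUnder (U : Filter II) (seqf T g) := rfl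

lemma muU_eq_indicator (U : Ultrafilter II) (A : Set II) (g : StrongDual ℝ X)
    (hg : ∀ i : II, g (T (ee (Encodable.encode i))) = if i ∈ A then 1 else 0) :
    muU T U g = if A ∈ U then 1 else 0 := by
  rw [muU_apply]
  split_ifs with h
  · refine tendsto_nhds_unique (tendsto_limUnder T U g) ?_
    have he : (fun _ : II => (1 : ℝ)) =ᶠ[(U : Filter II)] seqf T g := by
      filter_upwards [h] with i hi
      simp [seqf, hg i, hi]
    exact Tendsto.congr' he tendsto_const_nhds
  · have hcm : Aᶜ ∈ U := Ultrafilter.compl_mem_iff_notMem.2 h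
    refine tendsto_nhds_unique (tendsto_limUnder T U g) ?_
    have he : (fun _ : II => (0 : ℝ)) =ᶠ[(U : Filter II)] seqf T g := by
      filter_upwards [hcm] with i hi
      simp only [seqf, hg i]
      exact (if_neg hi).symm
    exact Tendsto.congr' he tendsto_const_nhds

noncomputable def Phi (𝒮 : Set (Set ℕ)) : StrongDual ℝ (StrongDual ℝ X) := muU T (USet 𝒮)

lemma Phi_injective {c : ℝ} (hc : 0 < c) (hT : ∀ y, c * ‖y‖ ≤ ‖T y‖) :
    Function.Injective (Phi T) := by
  intro 𝒮 𝒮' h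
  ext S
  obtain ⟨g, hg⟩ := exists_dual T hc hT (Encodable.encode '' AA S)
  have hg' : ∀ i : II, g (T (ee (Encodable.encode i))) = if i ∈ AA S then 1 else 0 := by
    intro i
    rw [hg]
    simp [Encodable.encode_injective.mem_set_image]
  have h1 := muU_eq_indicator T (USet 𝒮) (AA S) g hg'
  have h2 := muU_eq_indicator T (USet 𝒮') (AA S) g hg'
  rw [show muU T (USet 𝒮) = Phi T 𝒮 from rfl, h] at h1
  rw [show muU T (USet 𝒮') = Phi T 𝒮' from rfl] at h2
  rw [h1] at h2
  rw [mem_USet, mem_USet] at h2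
  constructor
  · intro hS
    by_contra hS'
    rw [if_pos hS, if_neg hS'] at h2
    norm_num at h2
  · intro hS'
    by_contra hS
    rw [if_neg hS, if_pos hS'] at h2
    norm_num at h2

end WithT

/-! ### Separable spaces inject into `ℕ → ℕ` -/

lemma exists_inj_nat (X : Type*) [NormedAddCommGroup X] [TopologicalSpace.SeparableSpace X] :
    ∃ f : X → (ℕ → ℕ), Function.Injective f := by
  have : Nonempty X := ⟨0⟩
  set u := TopologicalSpace.denseSeq X with hu
  have hdense : DenseRange u := TopologicalSpace.denseRange_denseSeq X
  have key : ∀ (x : X) (k : ℕ), ∃ n, dist (u n) x < 1 / (k + 1) := by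
    intro x k
    obtain ⟨y, hy1, n, rfl⟩ := Metric.dense_iff.1 hdense x (1 / (k + 1)) (by positivity)
    exact ⟨n, Metric.mem_ball.1 hy1⟩
  refine ⟨fun x k => (key x k).choose, ?_⟩
  intro x y hxy
  by_contra hne
  have hd : 0 < dist x y := dist_pos.2 hne
  obtain ⟨k, hk⟩ := exists_nat_gt (2 / dist x y)
  have hk1 : 2 / dist x y < (k : ℝ) + 1 := hk.trans (lt_add_one _)
  have h2 : 2 / ((k : ℝ) + 1) < dist x y := by
    rw [div_lt_iff₀ (by positivity)]
    rw [div_lt_iff₀ hd] at hk1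
    linarith [hk1]
  have hxk := (key x k).choose_spec
  have hyk := (key y k).choose_spec
  have hsame : (key x k).choose = (key y k).choose := congrFun hxy k
  rw [← hsame] at hyk
  have h3 : dist x y ≤ dist (u ((key x k).choose)) x + dist (u ((key x k).choose)) y := by
    rw [dist_comm (u _) x]
    exact dist_triangle x (u _) y
  have h5 : dist x y < 1 / ((k : ℝ) + 1) + 1 / ((k : ℝ) + 1) :=
    lt_of_le_of_lt h3 (add_lt_add hxk hyk)
  have h6 : (1 : ℝ) / ((k : ℝ) + 1) + 1 / ((k : ℝ) + 1) = 2 / ((k : ℝ) + 1) := by ring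
  linarith


/-! ### Representable singletons give weak* sequential limits -/

lemma mem_L_of_representable {X : Type*} [NormedAddCommGroup X] [NormedSpace ℝ X]
    {μ : StrongDual ℝ (StrongDual ℝ X)} (C : ℕ → Set X)
    (hne : ∀ n, (C n).Nonempty) (hbdd : Bornology.IsBounded (C 0))
    (hnest : ∀ n, C (n + 1) ⊆ C n)
    (heq : {μ} = ⋂ n, wClosure (⇑(inclusionInDoubleDual ℝ X) '' C n)) :
    ∃ x : ℕ → X, Tendsto
      (fun n => StrongDual.toWeakDual ((inclusionInDoubleDual ℝ X) (x n))) atTop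
      (𝓝 (StrongDual.toWeakDual μ)) := by
  set J := inclusionInDoubleDual ℝ X with hJ
  set B : ℕ → Set (WeakDual ℝ (StrongDual ℝ X)) :=
    fun n => ⇑StrongDual.toWeakDual '' (⇑J '' C n) with hB
  set K : ℕ → Set (WeakDual ℝ (StrongDual ℝ X)) := fun n => closure (B n) with hK
  have hmono : ∀ m n, m ≤ n → C n ⊆ C m := by
    intro m n hmn
    induction n, hmn using Nat.le_induction with
    | base => exact subset_rfl
    | succ n hmn ih => exact (hnest n).trans ih
  choose x hx using hne
  set y : ℕ → WeakDual ℝ (StrongDual ℝ X) := fun n => StrongDual.toWeakDual (J (x n)) with hy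
  have hyB : ∀ m n, m ≤ n → y n ∈ B m := by
    intro m n hmn
    exact ⟨J (x n), ⟨x n, hmono m n hmn (hx n), rfl⟩, rfl⟩
  obtain ⟨R, hR⟩ := hbdd.subset_closedBall 0
  have hKsub : K 0 ⊆ WeakDual.toStrongDual ⁻¹' Metric.closedBall 0 R := by
    apply closure_minimal _ (WeakDual.isClosed_closedBall 0 R)
    rintro - ⟨-, ⟨z, hz, rfl⟩, rfl⟩
    have h1 : ‖z‖ ≤ R := by
      have := hR hz
      rwa [Metric.mem_closedBall, dist_zero_right] at this
    have h2 : ‖J z‖ ≤ ‖z‖ := double_dual_bound ℝ X z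
    show StrongDual.toWeakDual (J z) ∈ _
    simp only [Set.mem_preimage, Metric.mem_closedBall, dist_zero_right]
    exact le_trans h2 h1
  have hK0 : IsCompact (K 0) :=
    (WeakDual.isCompact_closedBall 0 R).of_isClosed_subset isClosed_closure hKsub
  have hwc : ∀ n, wClosure (⇑J '' C n) = ⇑StrongDual.toWeakDual ⁻¹' K n := fun n => rfl
  have hμK : ∀ n, StrongDual.toWeakDual μ ∈ K n := by
    intro n
    have h1 : μ ∈ ⋂ n, wClosure (⇑J '' C n) := heq ▸ Set.mem_singleton μ
    have h2 := Set.mem_iInter.1 h1 n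
    rwa [hwc n] at h2
  have huniq : ∀ w, (∀ n, w ∈ K n) → w = StrongDual.toWeakDual μ := by
    intro w hw
    set ν := StrongDual.toWeakDual.symm w with hν
    have hτν : StrongDual.toWeakDual ν = w := StrongDual.toWeakDual.apply_symm_apply w
    have h1 : ν ∈ ⋂ n, wClosure (⇑J '' C n) := by
      rw [Set.mem_iInter]
      intro n
      rw [hwc n]
      show StrongDual.toWeakDual ν ∈ K n
      rw [hτν]
      exact hw n
    rw [← heq] at h1
    rw [← hτν, Set.eq_of_mem_singleton h1]
  refine ⟨x, ?_⟩
  apply hK0.tendsto_nhds_of_unique_mapClusterPt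
  · exact Filter.Eventually.of_forall fun n => subset_closure (hyB 0 n (Nat.zero_le n))
  · intro w hw0 hw
    apply huniq
    intro m
    show w ∈ closure (B m)
    rw [mem_closure_iff_nhds]
    intro t ht
    have hfreq : ∃ᶠ n in atTop, y n ∈ t := (mapClusterPt_iff_frequently.1 hw) t ht
    obtain ⟨n, hnt, hnm⟩ := (hfreq.and_eventually (eventually_ge_atTop m)).exists
    exact ⟨y n, hnt, hyB m n hnm⟩

end NotRep


/-- If a separable Banach space `X` contains an isomorphic copy of `ℓ¹`, then some singleton
`{μ} ⊆ X**` (a norm-compact convex set) is not representable by a nested sequence of nonempty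
bounded closed convex subsets of `X`. -/
theorem exists_singleton_not_representable_of_l1
    {X : Type*} [NormedAddCommGroup X] [NormedSpace ℝ X] [CompleteSpace X]
    [TopologicalSpace.SeparableSpace X]
    (hl1 : ∃ (T : lp (fun _ : ℕ => ℝ) 1 →L[ℝ] X) (c : ℝ), 0 < c ∧
      ∀ y : lp (fun _ : ℕ => ℝ) 1, c * ‖y‖ ≤ ‖T y‖) :
    ∃ μ : StrongDual ℝ (StrongDual ℝ X),
      ¬ ∃ C : ℕ → Set X,
        (∀ n, (C n).Nonempty) ∧ (∀ n, Bornology.IsBounded (C n)) ∧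
        (∀ n, IsClosed (C n)) ∧ (∀ n, Convex ℝ (C n)) ∧ (∀ n, C (n + 1) ⊆ C n) ∧
        {μ} = ⋂ n, wClosure (⇑(inclusionInDoubleDual ℝ X) '' C n) := by
  obtain ⟨T, c, hc, hT⟩ := hl1
  by_contra hcon
  push_neg at hcon
  obtain ⟨f0, hf0⟩ := NotRep.exists_inj_nat X
  have hseq : ∀ 𝒮 : Set (Set ℕ), ∃ x : ℕ → X, Tendsto
      (fun n => StrongDual.toWeakDual ((inclusionInDoubleDual ℝ X) (x n))) atTop
      (𝓝 (StrongDual.toWeakDual (NotRep.Phi T 𝒮))) := by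
    intro 𝒮
    obtain ⟨C, h1, h2, h3, h4, h5, h6⟩ := hcon (NotRep.Phi T 𝒮)
    exact NotRep.mem_L_of_representable C h1 (h2 0) h5 h6
  choose xs hxs using hseq
  have hGinj : Function.Injective xs := by
    intro 𝒮 𝒮' h
    apply NotRep.Phi_injective T hc hT
    apply StrongDual.toWeakDual.injective
    apply tendsto_nhds_unique (hxs 𝒮)
    rw [h]
    exact hxs 𝒮'
  let e3 : (ℕ × ℕ × ℕ) ≃ ℕ := Denumerable.eqv (ℕ × ℕ × ℕ)
  let F : Set (Set ℕ) → Set ℕ := fun 𝒮 => e3 '' {q | f0 (xs 𝒮 q.1) q.2.1 = q.2.2}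
  have hFinj : Function.Injective F := by
    intro 𝒮 𝒮' h
    apply hGinj
    funext n
    apply hf0
    funext m
    have hset : {q : ℕ × ℕ × ℕ | f0 (xs 𝒮 q.1) q.2.1 = q.2.2} =
        {q : ℕ × ℕ × ℕ | f0 (xs 𝒮' q.1) q.2.1 = q.2.2} :=
      Set.image_injective.2 e3.injective h
    have hm : (n, m, f0 (xs 𝒮 n) m) ∈ {q : ℕ × ℕ × ℕ | f0 (xs 𝒮 q.1) q.2.1 = q.2.2} := rfl
    rw [hset] at hm
    exact hm.symm
  exact Function.cantor_injective F hFinj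
end

section
/- Let X be a real Banach space, let (C_n) be a nested sequence of nonempty bounded closed convex subsets of X, and suppose that ⋂_{n∈ℕ} cl_{w*}(J(C_n)) = {μ} for some μ ∈ X**. Then for every choice of points c_n ∈ C_n (n ∈ ℕ), the sequence (J(c_n)) converges to μ in the weak* topology of X**. -/
open NormedSpace Filter Topology

/-- If a nested sequence of nonempty bounded closed convex subsets of a Banach space `X` has
`⋂ₙ cl_{w*}(J(Cₙ)) = {μ}`, then any choice `cₙ ∈ Cₙ` gives a sequence with `J(cₙ) → μ` in the
weak* topology. -/
theorem tendsto_of_iInter_eq_singleton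
    {X : Type*} [NormedAddCommGroup X] [NormedSpace ℝ X] [CompleteSpace X]
    (C : ℕ → Set X)
    (hne : ∀ n, (C n).Nonempty) (hbdd : ∀ n, Bornology.IsBounded (C n))
    (hcl : ∀ n, IsClosed (C n)) (hconv : ∀ n, Convex ℝ (C n))
    (hnest : ∀ n, C (n + 1) ⊆ C n)
    (μ : StrongDual ℝ (StrongDual ℝ X))
    (hμ : (⋂ n, wClosure (⇑(inclusionInDoubleDual ℝ X) '' C n)) = {μ})
    (c : ℕ → X) (hc : ∀ n, c n ∈ C n) :
    Tendsto (fun n => StrongDual.toWeakDual (inclusionInDoubleDual ℝ X (c n))) atTop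
      (𝓝 (StrongDual.toWeakDual μ)) := by
  classical
  set J := inclusionInDoubleDual ℝ X with hJ
  set K : ℕ → Set (WeakDual ℝ (StrongDual ℝ X)) :=
    fun n => closure (⇑StrongDual.toWeakDual '' (⇑J '' C n)) with hK
  have hCanti : Antitone C := antitone_nat_of_succ_le hnest
  have hKanti : Antitone K := fun m n hmn =>
    closure_mono (Set.image_mono (Set.image_mono (hCanti hmn)))
  obtain ⟨r, hr⟩ := (hbdd 0).subset_closedBall 0
  have hBcpct : IsCompact (WeakDual.toStrongDual ⁻¹'
      Metric.closedBall (0 : StrongDual ℝ (StrongDual ℝ X)) r) :=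
    WeakDual.isCompact_closedBall 0 r
  have hKsub : ∀ n, K n ⊆ WeakDual.toStrongDual ⁻¹'
      Metric.closedBall (0 : StrongDual ℝ (StrongDual ℝ X)) r := by
    intro n
    apply closure_minimal _ hBcpct.isClosed
    rintro x ⟨y, ⟨z, hz, rfl⟩, rfl⟩
    simp only [Set.mem_preimage, Metric.mem_closedBall, dist_zero_right]
    refine (dist_zero_right (WeakDual.toStrongDual (StrongDual.toWeakDual (J z)))).trans_le ?_
    calc ‖WeakDual.toStrongDual (StrongDual.toWeakDual (J z))‖ = ‖J z‖ := rfl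
      _ ≤ ‖z‖ := double_dual_bound ℝ X z
      _ ≤ r := by
        have := hr (hCanti (Nat.zero_le n) hz)
        simpa [dist_zero_right] using this
  have hKcpct : ∀ n, IsCompact (K n) := fun n =>
    hBcpct.of_isClosed_subset isClosed_closure (hKsub n)
  have hKclosed : ∀ n, IsClosed (K n) := fun n => isClosed_closure
  -- identify the intersection of the K n
  have hsingle : ∀ x ∈ ⋂ n, K n, x = StrongDual.toWeakDual μ := by
    intro x hx
    set y := WeakDual.toStrongDual x with hy
    have hxy : StrongDual.toWeakDual y = x := rfl
    have : y ∈ ⋂ n, wClosure (⇑J '' C n) := by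
      simp only [Set.mem_iInter] at hx ⊢
      intro n
      show StrongDual.toWeakDual y ∈ closure (⇑StrongDual.toWeakDual '' (⇑J '' C n))
      rw [hxy]
      exact hx n
    rw [hμ] at this
    rw [← hxy, this]
  -- main argument: the K n eventually enter any neighborhood of μ
  rw [Filter.tendsto_def]
  intro U hU
  have hUnhds : ∀ x ∈ ⋂ n, K n, U ∈ 𝓝 x := by
    intro x hx
    rw [hsingle x hx]
    exact hU
  obtain ⟨N, hN⟩ := exists_subset_nhds_of_isCompact'
    (directed_of_isDirected_le fun m n hmn => hKanti hmn) hKcpct hKclosed hUnhds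
  refine Filter.mem_of_superset (Filter.Ici_mem_atTop N) ?_
  intro n hn
  have hmem : StrongDual.toWeakDual (J (c n)) ∈ K n :=
    subset_closure ⟨J (c n), ⟨c n, hc n, rfl⟩, rfl⟩
  exact hN (hKanti hn hmem)
end

section
/- (Bernardes) Let X be a real Banach space whose dual X* is separable. Then every nonempty convex weak*-compact subset C of the bidual X** is representable: there exists a nested sequence (C_n) of nonempty bounded closed convex subsets of X such that C = ⋂_{n∈ℕ} cl_{w*}(J(C_n)). -/
open NormedSpace Filter Topology

section Helpers

variable {X : Type*} [NormedAddCommGroup X] [NormedSpace ℝ X]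

private lemma exists_rep (t : Finset (StrongDual ℝ X)) (g : ((↥t → ℝ) →L[ℝ] ℝ)) :
    ∃ φ : StrongDual ℝ X, ∀ ψ : StrongDual ℝ (StrongDual ℝ X), ψ φ = g (fun f => ψ f.1) := by
  classical
  refine ⟨∑ f : ↥t, g (Pi.single f 1) • (f.1 : StrongDual ℝ X), fun ψ => ?_⟩
  rw [map_sum]
  have h1 : (fun f : ↥t => ψ f.1) = ∑ f : ↥t, Pi.single f (ψ f.1) := by
    ext j; rw [Finset.sum_apply]; simp [Pi.single_apply]
  rw [h1, map_sum]
  refine Finset.sum_congr rfl fun f _ => ?_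
  rw [map_smul, smul_eq_mul]
  have h2 : (Pi.single f (ψ f.1) : ↥t → ℝ) = (ψ f.1) • (Pi.single f 1 : ↥t → ℝ) := by
    ext j; simp [Pi.single_apply, Pi.smul_apply, mul_comm]
  rw [h2, map_smul, smul_eq_mul]
  ring

private lemma goldstine_fin (F : StrongDual ℝ (StrongDual ℝ X)) (M : ℝ) (hF : ‖F‖ ≤ M) (t : Finset (StrongDual ℝ X))
    (ε : ℝ) (hε : 0 < ε) : ∃ x : X, ‖x‖ ≤ M ∧ ∀ f ∈ t, |f x - F f| < ε := by
  classical
  have hM0 : (0:ℝ) ≤ M := (norm_nonneg F).trans hF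
  rcases eq_or_lt_of_le hM0 with hM | hM
  · -- M = 0, so F = 0
    have hF0 : F = 0 := by
      have h : ‖F‖ ≤ 0 := hF.trans hM.ge
      exact (ContinuousLinearMap.opNorm_zero_iff F).mp (le_antisymm h (norm_nonneg F))
    exact ⟨0, by simp [← hM], fun f _ => by simp [hF0, hε]⟩
  · set L : X →ₗ[ℝ] (↥t → ℝ) := LinearMap.pi (fun f => (f.1 : X →ₗ[ℝ] ℝ)) with hL
    set V : Set (↥t → ℝ) := L '' Metric.closedBall 0 M with hV
    set v₀ : ↥t → ℝ := fun f => F f.1 with hv₀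
    by_cases hv : v₀ ∈ closure V
    · obtain ⟨b, hbV, hdist⟩ := Metric.mem_closure_iff.mp hv ε hε
      obtain ⟨x, hx, rfl⟩ := hbV
      refine ⟨x, by simpa using hx, fun f hf => ?_⟩
      have h2 := (dist_pi_lt_iff hε).mp hdist ⟨f, hf⟩
      rw [Real.dist_eq] at h2
      have hLx : L x ⟨f, hf⟩ = f x := rfl
      rw [hLx] at h2
      simpa [abs_sub_comm] using h2
    · exfalso
      have hVconv : Convex ℝ (closure V) :=
        ((convex_closedBall (0:X) M).linear_image L).closure
      obtain ⟨g, u, hgu, hgv⟩ :=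
        geometric_hahn_banach_closed_point hVconv isClosed_closure hv
      obtain ⟨φ, hφ⟩ := exists_rep t g
      have hFφ : F φ = g v₀ := hφ F
      have hball : ∀ x : X, ‖x‖ ≤ M → φ x < u := by
        intro x hx
        have h1 : φ x = g (L x) := by
          have h := hφ (inclusionInDoubleDual ℝ X x)
          simp [dual_def] at h; exact h
        rw [h1]
        exact hgu (L x) (subset_closure ⟨x, by simpa using hx, rfl⟩)
      have hu0 : 0 < u := by simpa using hball 0 (by simp [hM0])
      have habs : ∀ x : X, ‖x‖ ≤ M → |φ x| ≤ u := by
        intro x hx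
        rcases abs_cases (φ x) with ⟨h, _⟩ | ⟨h, _⟩ <;> rw [h]
        · exact (hball x hx).le
        · have := hball (-x) (by simpa using hx)
          simpa using this.le
      have hnorm : ‖φ‖ ≤ u / M := by
        refine ContinuousLinearMap.opNorm_le_bound φ (div_nonneg hu0.le hM0) fun x => ?_
        rcases eq_or_ne x 0 with rfl | hx0
        · simp
        · have hxpos : 0 < ‖x‖ := norm_pos_iff.mpr hx0
          have hscale : ‖(M / ‖x‖) • x‖ ≤ M := by
            rw [norm_smul, norm_div, Real.norm_eq_abs, abs_of_pos hM, Real.norm_eq_abs,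
              abs_of_pos hxpos, div_mul_cancel₀ _ hxpos.ne']
          have h3 := habs _ hscale
          rw [map_smul, smul_eq_mul, abs_mul, abs_div, abs_of_pos hM, abs_of_pos hxpos] at h3
          have h5 : M * |φ x| ≤ u * ‖x‖ := by
            have h6 := mul_le_mul_of_nonneg_right h3 (norm_nonneg x)
            rwa [mul_right_comm, div_mul_cancel₀ _ hxpos.ne'] at h6
          rw [Real.norm_eq_abs, div_mul_eq_mul_div, le_div_iff₀ hM, mul_comm]
          exact h5
      have hle : F φ ≤ u := by
        have h7 : ‖F φ‖ ≤ ‖F‖ * ‖φ‖ := F.le_opNorm φ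
        have h8 : ‖F‖ * ‖φ‖ ≤ M * (u / M) :=
          mul_le_mul hF hnorm (norm_nonneg φ) hM0
        rw [mul_div_cancel₀ _ hM.ne'] at h8
        calc F φ ≤ ‖F φ‖ := le_abs_self _
          _ ≤ u := h7.trans h8
      rw [hFφ] at hle
      exact absurd hgv (not_lt.mpr hle)

private lemma mem_wclosure_of_finite_approx (S : Set (StrongDual ℝ (StrongDual ℝ X))) (F : StrongDual ℝ (StrongDual ℝ X))
    (h : ∀ (t : Finset (StrongDual ℝ X)) (ε : ℝ), 0 < ε → ∃ G ∈ S, ∀ f ∈ t, |G f - F f| < ε) :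
    StrongDual.toWeakDual F ∈ closure (⇑StrongDual.toWeakDual '' S) := by
  classical
  set e : WeakDual ℝ (StrongDual ℝ X) → (StrongDual ℝ X → ℝ) :=
    fun x y => topDualPairing ℝ (StrongDual ℝ X) x y with he
  rw [mem_closure_iff_nhds]
  intro U hU
  have hnhds : 𝓝 (StrongDual.toWeakDual F) =
      Filter.comap e (𝓝 (e (StrongDual.toWeakDual F))) := nhds_induced e _
  rw [hnhds, Filter.mem_comap] at hU
  obtain ⟨V, hV, hVU⟩ := hU
  rw [nhds_pi, Filter.mem_pi] at hV
  obtain ⟨I, hIfin, ts, hts, hsub⟩ := hV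
  choose eps heps hball using fun f => Metric.mem_nhds_iff.mp (hts f)
  obtain ⟨ε, hε, hεle⟩ : ∃ ε > 0, ∀ f ∈ hIfin.toFinset, ε ≤ eps f := by
    rcases hIfin.toFinset.eq_empty_or_nonempty with hemp | hne
    · exact ⟨1, one_pos, by simp [hemp]⟩
    · obtain ⟨b, hb, hmin⟩ := hIfin.toFinset.exists_min_image eps hne
      exact ⟨eps b, heps b, hmin⟩
  obtain ⟨G, hGS, hGapp⟩ := h hIfin.toFinset ε hε
  refine ⟨StrongDual.toWeakDual G, hVU ?_, Set.mem_image_of_mem _ hGS⟩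
  refine hsub fun f hfI => ?_
  have hf' : f ∈ hIfin.toFinset := hIfin.mem_toFinset.mpr hfI
  refine hball f ?_
  rw [Metric.mem_ball, Real.dist_eq]
  have : e (StrongDual.toWeakDual G) f = G f := rfl
  rw [this]
  have : e (StrongDual.toWeakDual F) f = F f := rfl
  rw [this]
  exact lt_of_lt_of_le (hGapp f hf') (hεle f hf')

private lemma wstar_separation (C : Set (StrongDual ℝ (StrongDual ℝ X))) (hconv : Convex ℝ C)
    (hcomp : IsCompact (⇑StrongDual.toWeakDual '' C)) (F : StrongDual ℝ (StrongDual ℝ X))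
    (hF : F ∉ C) :
    ∃ (φ : StrongDual ℝ X) (u : ℝ), (∀ G ∈ C, G φ < u) ∧ u < F φ := by
  classical
  by_cases hsep : ∀ t : Finset (StrongDual ℝ X),
      (fun f : ↥t => F f.1) ∈ (fun (G : StrongDual ℝ (StrongDual ℝ X)) (f : ↥t) => G f.1) '' C
  · exfalso
    set K := ⇑StrongDual.toWeakDual '' C with hK
    set Z : StrongDual ℝ X → Set (WeakDual ℝ (StrongDual ℝ X)) := fun f => {ψ | ψ f = F f} with hZ
    have hZc : ∀ f, IsClosed (Z f) :=
      fun f => isClosed_eq (WeakDual.eval_continuous f) continuous_const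
    have hne : (K ∩ ⋂ f, Z f).Nonempty := by
      by_contra hempty
      rw [Set.not_nonempty_iff_eq_empty] at hempty
      obtain ⟨t, ht⟩ := hcomp.elim_finite_subfamily_closed Z hZc hempty
      obtain ⟨G, hGC, hGeq⟩ := hsep t
      have : StrongDual.toWeakDual G ∈ K ∩ ⋂ f ∈ t, Z f := by
        refine ⟨Set.mem_image_of_mem _ hGC, ?_⟩
        simp only [Set.mem_iInter]
        intro f hf
        have := congrFun hGeq ⟨f, hf⟩
        exact this
      rw [ht] at this
      exact this
    obtain ⟨ψ, hψK, hψZ⟩ := hne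
    obtain ⟨G, hGC, rfl⟩ := hψK
    have : G = F := by
      ext f
      exact Set.mem_iInter.mp hψZ f
    exact hF (this ▸ hGC)
  · push_neg at hsep
    obtain ⟨t, hv⟩ := hsep
    set Lm : StrongDual ℝ (StrongDual ℝ X) →ₗ[ℝ] (↥t → ℝ) :=
      LinearMap.pi (fun f => ((ContinuousLinearMap.apply ℝ ℝ f.1 :
        StrongDual ℝ (StrongDual ℝ X) →L[ℝ] ℝ) : StrongDual ℝ (StrongDual ℝ X) →ₗ[ℝ] ℝ)) with hLm
    have hLmeq : ⇑Lm = fun (G : StrongDual ℝ (StrongDual ℝ X)) (f : ↥t) => G f.1 := rfl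
    have hconv' : Convex ℝ ((fun (G : StrongDual ℝ (StrongDual ℝ X)) (f : ↥t) => G f.1) '' C) := by
      rw [← hLmeq]; exact hconv.linear_image Lm
    have hcomp' : IsCompact ((fun (G : StrongDual ℝ (StrongDual ℝ X)) (f : ↥t) => G f.1) '' C) := by
      have := hcomp.image (continuous_pi fun f : ↥t => WeakDual.eval_continuous f.1)
      rwa [Set.image_image] at this
    obtain ⟨g, u, hgu, hgv⟩ :=
      geometric_hahn_banach_closed_point hconv' hcomp'.isClosed hv
    obtain ⟨φ, hφ⟩ := exists_rep t g
    refine ⟨φ, u, fun G hG => ?_, ?_⟩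
    · rw [hφ G]
      exact hgu _ (Set.mem_image_of_mem _ hG)
    · rw [hφ F]
      exact hgv

end Helpers

/-- (Bernardes) If the dual of a Banach space `X` is separable, then every nonempty convex
weak*-compact subset of `X**` is representable via a nested sequence of nonempty bounded closed
convex subsets of `X`. -/
theorem representable_of_separable_dual
    {X : Type*} [NormedAddCommGroup X] [NormedSpace ℝ X] [CompleteSpace X]
    [TopologicalSpace.SeparableSpace (StrongDual ℝ X)]
    (C : Set (StrongDual ℝ (StrongDual ℝ X)))
    (hne : C.Nonempty) (hconv : Convex ℝ C)
    (hcomp : IsCompact (⇑StrongDual.toWeakDual '' C)) :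
    ∃ D : ℕ → Set X,
      (∀ n, (D n).Nonempty) ∧ (∀ n, Bornology.IsBounded (D n)) ∧
      (∀ n, IsClosed (D n)) ∧ (∀ n, Convex ℝ (D n)) ∧ (∀ n, D (n + 1) ⊆ D n) ∧
      C = ⋂ n, wClosure (⇑(inclusionInDoubleDual ℝ X) '' D n) := by
  classical
  set J := inclusionInDoubleDual ℝ X with hJ
  -- a uniform norm bound on C
  obtain ⟨M, hM0, hMC⟩ : ∃ M : ℝ, 0 ≤ M ∧ ∀ G ∈ C, ‖G‖ ≤ M := by
    have hpt : ∀ φ : StrongDual ℝ X, ∃ c : ℝ, ∀ G : ↥C, ‖(G.1 : StrongDual ℝ X →L[ℝ] ℝ) φ‖ ≤ c := by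
      intro φ
      have hcpt : IsCompact ((fun ψ : WeakDual ℝ (StrongDual ℝ X) => ψ φ) ''
          (⇑StrongDual.toWeakDual '' C)) :=
        hcomp.image (WeakDual.eval_continuous φ)
      obtain ⟨c, hc⟩ := isBounded_iff_forall_norm_le.mp hcpt.isBounded
      exact ⟨c, fun G => hc _ ⟨_, Set.mem_image_of_mem _ G.2, rfl⟩⟩
    obtain ⟨M', hM'⟩ := banach_steinhaus (g := fun G : ↥C => (G.1 : StrongDual ℝ X →L[ℝ] ℝ)) hpt
    exact ⟨max M' 0, le_max_right _ _, fun G hG => le_max_of_le_left (hM' ⟨G, hG⟩)⟩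
  -- dense sequence in the dual
  have : Nonempty (StrongDual ℝ X) := ⟨0⟩
  obtain ⟨f, hf⟩ := TopologicalSpace.exists_dense_seq (StrongDual ℝ X)
  -- support values
  set s : ℕ → ℝ := fun k => sSup ((fun G => G (f k)) '' C) with hs
  have hbdd : ∀ k, BddAbove ((fun G => G (f k)) '' C) := by
    intro k
    refine ⟨M * ‖f k‖, fun y hy => ?_⟩
    obtain ⟨G, hG, rfl⟩ := hy
    calc G (f k) ≤ ‖G (f k)‖ := le_abs_self _
      _ ≤ ‖G‖ * ‖f k‖ := G.le_opNorm _
      _ ≤ M * ‖f k‖ := by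
          exact mul_le_mul_of_nonneg_right (hMC G hG) (norm_nonneg _)
  have hles : ∀ k, ∀ G ∈ C, G (f k) ≤ s k :=
    fun k G hG => le_csSup (hbdd k) (Set.mem_image_of_mem _ hG)
  have hssup : ∀ k b, (∀ G ∈ C, G (f k) ≤ b) → s k ≤ b := by
    intro k b hb
    exact csSup_le (hne.image _) (by rintro y ⟨G, hG, rfl⟩; exact hb G hG)
  -- the sets
  set D : ℕ → Set X := fun n =>
    Metric.closedBall (0:X) M ∩
      ⋂ k ∈ Finset.range (n+1), {x : X | f k x ≤ s k + 1/((n:ℝ)+1)} with hD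
  have hmemD : ∀ n (x : X), x ∈ D n ↔
      ‖x‖ ≤ M ∧ ∀ k ≤ n, f k x ≤ s k + 1/((n:ℝ)+1) := by
    intro n x
    simp only [hD, Set.mem_inter_iff, mem_closedBall_zero_iff, Set.mem_iInter,
      Finset.mem_range, Set.mem_setOf_eq, Nat.lt_succ_iff]
  have hinv_pos : ∀ n : ℕ, (0:ℝ) < 1/((n:ℝ)+1) := by
    intro n; positivity
  -- nonempty
  have hDne : ∀ n, (D n).Nonempty := by
    intro n
    obtain ⟨F₀, hF₀⟩ := hne
    obtain ⟨x, hx, happ⟩ := goldstine_fin F₀ M (hMC F₀ hF₀)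
      ((Finset.range (n+1)).image f) (1/((n:ℝ)+1)) (hinv_pos n)
    refine ⟨x, (hmemD n x).mpr ⟨hx, fun k hk => ?_⟩⟩
    have hfk : f k ∈ (Finset.range (n+1)).image f :=
      Finset.mem_image_of_mem f (Finset.mem_range.mpr (Nat.lt_succ_of_le hk))
    have h1 := happ (f k) hfk
    have h2 := abs_lt.mp h1
    have := hles k F₀ hF₀
    linarith [h2.2]
  -- bounded, closed, convex, nested
  have hDbd : ∀ n, Bornology.IsBounded (D n) :=
    fun n => (Metric.isBounded_closedBall).subset (Set.inter_subset_left)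
  have hDcl : ∀ n, IsClosed (D n) := by
    intro n
    refine IsClosed.inter Metric.isClosed_closedBall ?_
    refine isClosed_biInter fun k _ => isClosed_le (f k).continuous continuous_const
  have hDcv : ∀ n, Convex ℝ (D n) := by
    intro n
    refine (convex_closedBall _ _).inter ?_
    refine convex_iInter fun k => convex_iInter fun _ => ?_
    exact convex_halfSpace_le ⟨map_add (f k), map_smul (f k)⟩ _
  have hDnest : ∀ n, D (n+1) ⊆ D n := by
    intro n x hx
    rw [hmemD] at hx ⊢
    refine ⟨hx.1, fun k hk => ?_⟩
    have h1 := hx.2 k (hk.trans (Nat.le_succ n))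
    have h2 : 1/((n:ℝ)+1+1) ≤ 1/((n:ℝ)+1) := by
      apply one_div_le_one_div_of_le <;> push_cast <;> linarith
    push_cast at h1 ⊢
    linarith
  refine ⟨D, hDne, hDbd, hDcl, hDcv, hDnest, ?_⟩
  apply Set.Subset.antisymm
  · -- C ⊆ ⋂
    intro F hF
    refine Set.mem_iInter.mpr fun n => ?_
    show StrongDual.toWeakDual F ∈ closure _
    apply mem_wclosure_of_finite_approx
    intro t ε hε
    have hεn : 0 < min ε (1/((n:ℝ)+1)) := lt_min hε (hinv_pos n)
    obtain ⟨x, hx, happ⟩ := goldstine_fin F M (hMC F hF)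
      (t ∪ (Finset.range (n+1)).image f) (min ε (1/((n:ℝ)+1))) hεn
    refine ⟨J x, ⟨x, ?_, rfl⟩, fun φ hφ => ?_⟩
    · refine (hmemD n x).mpr ⟨hx, fun k hk => ?_⟩
      have hfk : f k ∈ t ∪ (Finset.range (n+1)).image f :=
        Finset.mem_union_right _
          (Finset.mem_image_of_mem f (Finset.mem_range.mpr (Nat.lt_succ_of_le hk)))
      have h1 := abs_lt.mp (happ (f k) hfk)
      have h2 := hles k F hF
      have h3 : min ε (1/((n:ℝ)+1)) ≤ 1/((n:ℝ)+1) := min_le_right _ _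
      linarith [h1.2]
    · have h1 := happ φ (Finset.mem_union_left _ hφ)
      have h2 : J x φ = φ x := dual_def ℝ X x φ
      rw [h2]
      exact lt_of_lt_of_le h1 (min_le_left _ _)
  · -- ⋂ ⊆ C
    intro F hF
    have hFn : ∀ n, StrongDual.toWeakDual F ∈
        closure (⇑StrongDual.toWeakDual '' (⇑J '' D n)) :=
      fun n => Set.mem_iInter.mp hF n
    -- (a) pointwise norm bound
    have hFnorm : ∀ φ : StrongDual ℝ X, |F φ| ≤ M * ‖φ‖ := by
      intro φ
      have hcl : IsClosed {ψ : WeakDual ℝ (StrongDual ℝ X) | |ψ φ| ≤ M * ‖φ‖} :=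
        isClosed_le (continuous_abs.comp (WeakDual.eval_continuous φ)) continuous_const
      have himg : ⇑StrongDual.toWeakDual '' (⇑J '' D 0) ⊆
          {ψ : WeakDual ℝ (StrongDual ℝ X) | |ψ φ| ≤ M * ‖φ‖} := by
        rintro _ ⟨_, ⟨x, hx, rfl⟩, rfl⟩
        have hxM : ‖x‖ ≤ M := ((hmemD 0 x).mp hx).1
        show |J x φ| ≤ M * ‖φ‖
        rw [dual_def ℝ X x φ]
        calc |φ x| ≤ ‖φ‖ * ‖x‖ := φ.le_opNorm x
          _ ≤ ‖φ‖ * M := mul_le_mul_of_nonneg_left hxM (norm_nonneg _)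
          _ = M * ‖φ‖ := mul_comm _ _
      exact closure_minimal himg hcl (hFn 0)
    -- (b) support constraints
    have hFk : ∀ k, F (f k) ≤ s k := by
      intro k
      have hstep : ∀ n, k ≤ n → F (f k) ≤ s k + 1/((n:ℝ)+1) := by
        intro n hkn
        have hcl : IsClosed {ψ : WeakDual ℝ (StrongDual ℝ X) | ψ (f k) ≤ s k + 1/((n:ℝ)+1)} :=
          isClosed_le (WeakDual.eval_continuous (f k)) continuous_const
        have himg : ⇑StrongDual.toWeakDual '' (⇑J '' D n) ⊆
            {ψ : WeakDual ℝ (StrongDual ℝ X) | ψ (f k) ≤ s k + 1/((n:ℝ)+1)} := by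
          rintro _ ⟨_, ⟨x, hx, rfl⟩, rfl⟩
          show J x (f k) ≤ s k + 1/((n:ℝ)+1)
          rw [dual_def ℝ X x (f k)]
          exact ((hmemD n x).mp hx).2 k hkn
        exact closure_minimal himg hcl (hFn n)
      refine le_of_forall_pos_le_add fun ε hε => ?_
      obtain ⟨m, hm⟩ := exists_nat_one_div_lt hε
      have h1 := hstep (max k m) (le_max_left _ _)
      have h2 : 1/(((max k m):ℝ)+1) ≤ 1/((m:ℝ)+1) := by
        apply one_div_le_one_div_of_le
        · positivity
        · exact_mod_cast Nat.succ_le_succ (le_max_right k m)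
      push_cast at h1
      linarith
    -- conclude F ∈ C
    by_contra hFC
    obtain ⟨φ, u, hGu, huF⟩ := wstar_separation C hconv hcomp F hFC
    set δ := F φ - u with hδ
    have hδ0 : 0 < δ := by simp [hδ]; linarith
    obtain ⟨k, hk⟩ := hf.exists_dist_lt φ (show 0 < δ/(2*M+2) by positivity)
    rw [dist_eq_norm] at hk
    set d := ‖φ - f k‖ with hd
    have hd0 : 0 ≤ d := norm_nonneg _
    have hsku : s k ≤ u + M * d := by
      refine hssup k _ fun G hG => ?_
      have h1 : G (f k) - G φ = G (f k - φ) := by rw [map_sub]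
      have h2 : ‖G (f k - φ)‖ ≤ ‖G‖ * ‖f k - φ‖ := G.le_opNorm _
      have h3 : ‖f k - φ‖ = d := by rw [hd, norm_sub_rev]
      have h4 : ‖G‖ * ‖f k - φ‖ ≤ M * d := by
        rw [h3]; exact mul_le_mul_of_nonneg_right (hMC G hG) hd0
      have h5 : G (f k) - G φ ≤ M * d := by
        rw [h1]; exact (le_abs_self _).trans (h2.trans h4)
      linarith [hGu G hG]
    have hFφk : F φ - F (f k) ≤ M * d := by
      have h2 := hFnorm (φ - f k)
      rw [← hd] at h2
      have h1 : F φ - F (f k) = F (φ - f k) := (map_sub F φ (f k)).symm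
      rw [h1]
      exact (le_abs_self _).trans h2
    have h2Md : (2*M+2) * d < δ := by
      have := (lt_div_iff₀ (show (0:ℝ) < 2*M+2 by linarith)).mp hk
      linarith [this]
    have h6 : (2*M+2)*d = 2*(M*d) + 2*d := by ring
    linarith [hFk k]
end

section
/- Let X be a real Banach space and let (C_n) be a nested sequence of nonempty bounded closed convex subsets of X. Suppose the set K = ⋂_{n∈ℕ} cl_{w*}(J(C_n)) ⊆ X** is metrizable in the subspace topology induced by the weak* topology of X**. Then every g ∈ K is the weak*-limit of a sequence (J(c_n)) with c_n ∈ C_n for every n. -/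
open NormedSpace Filter Topology

/-- If the intersection `K = ⋂ₙ cl_{w*}(J(Cₙ))` of a nested sequence of nonempty bounded closed
convex subsets of a Banach space `X` is weak*-metrizable, then every `g ∈ K` is the weak*-limit
of a sequence `(J(cₙ))` with `cₙ ∈ Cₙ`. -/
theorem mem_iInter_is_weakStar_limit_of_metrizable
    {X : Type*} [NormedAddCommGroup X] [NormedSpace ℝ X] [CompleteSpace X]
    (C : ℕ → Set X)
    (hne : ∀ n, (C n).Nonempty) (hbdd : ∀ n, Bornology.IsBounded (C n))
    (hcl : ∀ n, IsClosed (C n)) (hconv : ∀ n, Convex ℝ (C n))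
    (hnest : ∀ n, C (n + 1) ⊆ C n)
    (K : Set (StrongDual ℝ (StrongDual ℝ X)))
    (hK : K = ⋂ n, wClosure (⇑(inclusionInDoubleDual ℝ X) '' C n))
    (hmetr : TopologicalSpace.MetrizableSpace (⇑StrongDual.toWeakDual '' K)) :
    ∀ g ∈ K, ∃ c : ℕ → X, (∀ n, c n ∈ C n) ∧
      Tendsto (fun n => StrongDual.toWeakDual (inclusionInDoubleDual ℝ X (c n))) atTop
        (𝓝 (StrongDual.toWeakDual g)) := by
  intro g hg
  set J := inclusionInDoubleDual ℝ X with hJ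
  set KS : Set (WeakDual ℝ (StrongDual ℝ X)) := ⇑StrongDual.toWeakDual '' K with hKS
  set S : ℕ → Set (WeakDual ℝ (StrongDual ℝ X)) :=
    fun n => ⇑StrongDual.toWeakDual '' (⇑J '' C n) with hS
  set D : ℕ → Set (WeakDual ℝ (StrongDual ℝ X)) := fun n => closure (S n) with hD
  set g' : WeakDual ℝ (StrongDual ℝ X) := StrongDual.toWeakDual g with hg'
  -- `g'` is in every `D n`
  have hgD : ∀ n, g' ∈ D n := by
    intro n
    have := hK ▸ hg
    rw [Set.mem_iInter] at this
    exact this n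
  -- `D` is antitone
  have hDanti : Antitone D := by
    apply antitone_nat_of_succ_le
    intro n
    exact closure_mono (Set.image_mono (Set.image_mono (hnest n)))
  -- every point in all `D n` lies in `KS`
  have hmemKS : ∀ y : WeakDual ℝ (StrongDual ℝ X), (∀ n, y ∈ D n) → y ∈ KS := by
    intro y hy
    refine ⟨StrongDual.toWeakDual.symm y, ?_, by simp⟩
    rw [hK, Set.mem_iInter]
    intro n
    show StrongDual.toWeakDual (StrongDual.toWeakDual.symm y) ∈ closure (S n)
    simpa using hy n
  -- each `D n` is compact
  have hDcomp : ∀ n, IsCompact (D n) := by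
    intro n
    obtain ⟨R, hR⟩ := (hbdd n).subset_closedBall (0 : X)
    apply WeakDual.isCompact_of_bounded_of_closed ?_ isClosed_closure
    have hsub : D n ⊆ ⇑WeakDual.toStrongDual ⁻¹' Metric.closedBall 0 R := by
      apply closure_minimal ?_ (WeakDual.isClosed_closedBall 0 R)
      rintro - ⟨-, ⟨x, hx, rfl⟩, rfl⟩
      simp only [Set.mem_preimage, Metric.mem_closedBall, dist_zero_right]
      show ‖J x‖ ≤ R
      rw [hJ]
      exact le_trans (NormedSpace.double_dual_bound ℝ X x) (by simpa using hR hx)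
    apply Bornology.IsBounded.subset (Metric.isBounded_closedBall (x := (0 : StrongDual ℝ (StrongDual ℝ X))) (r := R))
    intro z hz
    have := hsub hz
    exact this
  -- metric on KS
  letI : MetricSpace KS := TopologicalSpace.metrizableSpaceMetric KS
  have hgKS : g' ∈ KS := ⟨g, hg, rfl⟩
  set gS : KS := ⟨g', hgKS⟩ with hgS
  -- small closed neighborhoods
  have key : ∀ m : ℕ, ∃ F : Set (WeakDual ℝ (StrongDual ℝ X)), F ∈ 𝓝 g' ∧ IsClosed F ∧
      ∀ y (hy : y ∈ KS), y ∈ F → dist (⟨y, hy⟩ : KS) gS < 1 / (m + 1) := by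
    intro m
    have hpos : (0 : ℝ) < 1 / (m + 1) := by positivity
    have ht : (Subtype.val '' Metric.ball gS (1 / (m + 1)) ∪ KSᶜ) ∈ 𝓝[KS] g' := by
      rw [nhdsWithin_eq_map_subtype_coe hgKS]
      apply Filter.mem_map.2
      filter_upwards [Metric.ball_mem_nhds gS hpos] with z hz
      exact Or.inl ⟨z, hz, rfl⟩
    rw [mem_nhdsWithin] at ht
    obtain ⟨V, hVo, hVg, hVsub⟩ := ht
    obtain ⟨F, hFn, hFc, hFV⟩ := exists_mem_nhds_isClosed_subset (hVo.mem_nhds hVg)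
    refine ⟨F, hFn, hFc, ?_⟩
    intro y hy hyF
    have : y ∈ Subtype.val '' Metric.ball gS (1 / (m + 1)) ∪ KSᶜ := hVsub ⟨hFV hyF, hy⟩
    rcases this with ⟨z, hz, hzy⟩ | h
    · have : z = (⟨y, hy⟩ : KS) := Subtype.ext hzy
      rwa [this] at hz
    · exact absurd hy h
  choose F hFn hFc hFsmall using key
  set T : ℕ → Set (WeakDual ℝ (StrongDual ℝ X)) := fun m => ⋂ k ∈ Finset.range (m + 1), F k with hT
  have hTn : ∀ m, T m ∈ 𝓝 g' := fun m => (Filter.biInter_finset_mem _).2 fun k _ => hFn k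
  have hTc : ∀ m, IsClosed (T m) := fun m =>
    isClosed_biInter fun k _ => hFc k
  have hTanti : Antitone T := by
    apply antitone_nat_of_succ_le
    intro n
    apply Set.iInter₂_mono'
    intro k hk
    exact ⟨k, Finset.mem_range.2 (Nat.lt_succ_of_lt (Finset.mem_range.1 hk)), subset_rfl⟩
  have hTF : ∀ m, T m ⊆ F m := fun m =>
    Set.biInter_subset_of_mem (Finset.mem_range.2 (Nat.lt_succ_self m))
  -- choose the sequence
  have hpick : ∀ m : ℕ, ∃ x ∈ C m, StrongDual.toWeakDual (J x) ∈ T m := by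
    intro m
    obtain ⟨y, hyT, hyS⟩ := mem_closure_iff_nhds.1 (hgD m) (T m) (hTn m)
    obtain ⟨-, ⟨x, hx, rfl⟩, rfl⟩ := hyS
    exact ⟨x, hx, hyT⟩
  choose c hc hcT using hpick
  refine ⟨c, hc, ?_⟩
  set x : ℕ → WeakDual ℝ (StrongDual ℝ X) := fun n => StrongDual.toWeakDual (J (c n)) with hx
  show Tendsto x atTop (𝓝 g')
  have hxS : ∀ n, x n ∈ S n := fun n => ⟨J (c n), ⟨c n, hc n, rfl⟩, rfl⟩
  by_contra hcon
  rw [(closed_nhds_basis g').tendsto_right_iff] at hcon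
  push_neg at hcon
  obtain ⟨s, ⟨hsn, hsc⟩, hsf⟩ := hcon
  -- the filter of the subsequence avoiding s
  set f : Filter (WeakDual ℝ (StrongDual ℝ X)) := map x atTop ⊓ 𝓟 sᶜ with hf
  have hfne : f.NeBot := by
    rw [hf]
    have hne2 : (atTop ⊓ 𝓟 {n | x n ∉ id s}).NeBot := Filter.frequently_iff_neBot.mp hsf
    have hle : map x (atTop ⊓ 𝓟 {n | x n ∉ id s}) ≤ map x atTop ⊓ 𝓟 sᶜ := by
      refine le_inf (map_mono inf_le_left) ?_
      refine le_trans (map_mono inf_le_right) ?_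
      rw [Filter.map_principal, Filter.principal_mono]
      rintro - ⟨n, hn, rfl⟩
      exact hn
    exact Filter.neBot_of_le hle
  have hfD : ∀ m, f ≤ 𝓟 (D m ∩ T m) := by
    intro m
    refine le_trans inf_le_left ?_
    rw [Filter.le_principal_iff, Filter.mem_map]
    filter_upwards [Filter.eventually_ge_atTop m] with k hk
    exact ⟨hDanti hk (subset_closure (hxS k)), hTanti hk (hcT k)⟩
  have hfD0 : f ≤ 𝓟 (D 0) :=
    le_trans (hfD 0) (Filter.principal_mono.2 Set.inter_subset_left)
  obtain ⟨y, hyD0, hyc⟩ := (hDcomp 0).exists_clusterPt hfD0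
  -- y lies in every D m ∩ T m
  have hyDT : ∀ m, y ∈ D m ∩ T m := by
    intro m
    have : ClusterPt y (𝓟 (D m ∩ T m)) := hyc.mono (hfD m)
    have hmem := mem_closure_iff_clusterPt.2 this
    rwa [IsClosed.closure_eq ((hDcomp m).isClosed.inter (hTc m))] at hmem
  have hyKS : y ∈ KS := hmemKS y fun m => (hyDT m).1
  -- y = g'
  have hyg : y = g' := by
    have hdist : ∀ m : ℕ, dist (⟨y, hyKS⟩ : KS) gS < 1 / (m + 1) :=
      fun m => hFsmall m y hyKS (hTF m (hyDT m).2)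
    have : dist (⟨y, hyKS⟩ : KS) gS ≤ 0 := by
      by_contra hlt
      push_neg at hlt
      obtain ⟨m, hm⟩ := exists_nat_one_div_lt hlt
      exact absurd (hdist m) (not_lt.2 hm.le)
    have := le_antisymm this dist_nonneg
    have : (⟨y, hyKS⟩ : KS) = gS := by rwa [dist_eq_zero] at this
    exact congrArg Subtype.val this
  -- but y is in the closure of sᶜ, contradicting g' ∈ interior s
  have hysc : y ∈ closure sᶜ := by
    have : ClusterPt y (𝓟 sᶜ) := hyc.mono inf_le_right
    exact mem_closure_iff_clusterPt.2 this
  rw [closure_compl] at hysc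
  exact hysc (hyg ▸ mem_interior_iff_mem_nhds.2 hsn)
end

section
/- Let X be a separable real Banach space and let C be a nonempty weak*-compact convex subset of the bidual X** with C ∩ J(X) = ∅. Then there exists a nested sequence (C_n) of nonempty bounded closed convex subsets of X such that C ⊆ ⋂_{n∈ℕ} cl_{w*}(J(C_n)) and, for every x ∈ X, dist(J(x), C) = lim_{n→∞} dist(x, C_n), where the distance on the left is taken in the norm of X** and on the right in the norm of X. -/
open NormedSpace Filter Topology Metric

section AuxLemmas

lemma le_infDist_of_forall {α : Type*} [PseudoMetricSpace α] {s : Set α} (hs : s.Nonempty)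
    {x : α} {b : ℝ} (h : ∀ y ∈ s, b ≤ dist x y) : b ≤ infDist x s := by
  rw [infDist_eq_iInf]
  haveI := hs.to_subtype
  exact le_ciInf fun y => h y y.2

lemma weakBilin_functional_rep {E F : Type*} [AddCommGroup E] [Module ℝ E]
    [AddCommGroup F] [Module ℝ F] (B : E →ₗ[ℝ] F →ₗ[ℝ] ℝ)
    (φ : WeakBilin B →L[ℝ] ℝ) : ∃ g : F, ∀ x : WeakBilin B, φ x = B x g := by
  have hp : WithSeminorms (LinearMap.toSeminormFamily B : F → Seminorm ℝ (WeakBilin B)) :=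
    B.weakBilin_withSeminorms
  set q : Seminorm ℝ (WeakBilin B) := (normSeminorm ℝ ℝ).comp (φ.toLinearMap) with hq
  have hqc : Continuous q := by
    rw [hq, Seminorm.coe_comp, coe_normSeminorm]
    exact continuous_norm.comp φ.continuous
  obtain ⟨s, c, hc, hle⟩ := Seminorm.bound_of_continuous hp q hqc
  have hker : ∀ x : WeakBilin B, (∀ i ∈ s, B x i = 0) → φ x = 0 := by
    intro x hx
    have h1 : q x ≤ (c : ℝ) * (s.sup (LinearMap.toSeminormFamily B)) x := hle x
    have h2 : (s.sup (LinearMap.toSeminormFamily B)) x ≤ 0 := by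
      refine Seminorm.finset_sup_apply_le le_rfl fun i hi => ?_
      change ‖(B x) i‖ ≤ 0
      rw [hx i hi, norm_zero]
    have h3 : q x = ‖φ x‖ := rfl
    have h4 : ‖φ x‖ ≤ 0 := by
      refine (h3 ▸ h1).trans ?_
      have := mul_le_mul_of_nonneg_left h2 c.coe_nonneg
      simpa using this
    simpa using le_antisymm h4 (norm_nonneg _)
  set L : s → (WeakBilin B) →ₗ[ℝ] ℝ := fun i => B.flip (i : F) with hL
  have hker' : (⨅ i : s, LinearMap.ker (L i)) ≤ LinearMap.ker (φ : WeakBilin B →ₗ[ℝ] ℝ) := by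
    intro x hx
    simp only [Submodule.mem_iInf] at hx
    have : ∀ i ∈ s, B x i = 0 := fun i hi => hx ⟨i, hi⟩
    simpa [LinearMap.mem_ker] using hker x this
  have hspan := mem_span_of_iInf_ker_le_ker (𝕜 := ℝ) hker'
  obtain ⟨cf, hcf⟩ := (Submodule.mem_span_range_iff_exists_fun ℝ).1 hspan
  refine ⟨∑ i : s, cf i • (i : F), fun x => ?_⟩
  have h1 : φ x = (∑ i : s, cf i • L i) x := by rw [hcf]; rfl
  rw [h1, LinearMap.sum_apply, map_sum]
  refine Finset.sum_congr rfl fun i _ => ?_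
  rw [LinearMap.smul_apply, map_smul, hL]
  rfl

lemma weakDual_functional_rep {E : Type*} [NormedAddCommGroup E] [NormedSpace ℝ E]
    (φ : WeakDual ℝ E →L[ℝ] ℝ) : ∃ g : E, ∀ G : WeakDual ℝ E, φ G = G g := by
  obtain ⟨g, hg⟩ := weakBilin_functional_rep (topDualPairing ℝ E) φ
  exact ⟨g, fun G => hg G⟩

lemma goldstine {X : Type*} [NormedAddCommGroup X] [NormedSpace ℝ X]
    {R : ℝ} (hR : 0 < R) (F : StrongDual ℝ (StrongDual ℝ X)) (hF : ‖F‖ ≤ R) :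
    StrongDual.toWeakDual F ∈
      closure (⇑StrongDual.toWeakDual ''
        (⇑(inclusionInDoubleDual ℝ X) '' closedBall (0 : X) R)) := by
  by_contra hmem
  set S := ⇑StrongDual.toWeakDual ''
      (⇑(inclusionInDoubleDual ℝ X) '' closedBall (0 : X) R) with hS
  have hconv : Convex ℝ (closure S) := by
    refine Convex.closure ?_
    have hSeq : S = ⇑((StrongDual.toWeakDual (𝕜 := ℝ) (E := StrongDual ℝ X)).toLinearMap
        ∘ₗ (inclusionInDoubleDual ℝ X).toLinearMap) '' closedBall (0 : X) R := by
      rw [hS, ← Set.image_comp]; rfl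
    rw [hSeq]
    exact (convex_closedBall (0 : X) R).linear_image _
  letI : LocallyConvexSpace ℝ (WeakDual ℝ (StrongDual ℝ X)) :=
    by unfold WeakDual; exact WeakBilin.locallyConvexSpace (E := StrongDual ℝ (StrongDual ℝ X)) (F := StrongDual ℝ X)
  obtain ⟨φ, u, hu, huF⟩ :=
    geometric_hahn_banach_closed_point hconv isClosed_closure hmem
  obtain ⟨g, hg⟩ := weakDual_functional_rep φ
  have hball : ∀ y : X, ‖y‖ ≤ R → g y < u := by
    intro y hy
    have hmem' : StrongDual.toWeakDual (inclusionInDoubleDual ℝ X y) ∈ closure S :=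
      subset_closure ⟨_, ⟨y, by simpa using hy, rfl⟩, rfl⟩
    have := hu _ hmem'
    rwa [hg] at this
  have hu0 : 0 < u := by
    have := hball 0 (by simpa using hR.le)
    simpa using this
  have hgnorm : ‖g‖ ≤ u / R := by
    refine ContinuousLinearMap.opNorm_le_of_unit_norm (div_nonneg hu0.le hR.le) fun z hz => ?_
    have h1 : g (R • z) < u := hball _ (by rw [norm_smul, hz]; simp [abs_of_pos hR])
    have h2 : g (-(R • z)) < u := hball _ (by rw [norm_neg, norm_smul, hz]; simp [abs_of_pos hR])
    rw [map_smul] at h1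
    rw [map_neg, map_smul] at h2
    rw [smul_eq_mul] at h1 h2
    rw [Real.norm_eq_abs, abs_le]
    constructor
    · rw [neg_le, ← neg_mul] at *
      rw [le_div_iff₀ hR]
      linarith
    · rw [le_div_iff₀ hR]
      linarith
  have hFg : u < F g := by
    have := huF
    rwa [hg] at this
  have : F g ≤ u := by
    calc F g ≤ ‖F g‖ := le_abs_self _
    _ ≤ ‖F‖ * ‖g‖ := F.le_opNorm g
    _ ≤ R * (u / R) := by
        apply mul_le_mul hF hgnorm (norm_nonneg _) hR.le
    _ = u := by field_simp
  linarith

lemma bounded_of_wstar_compact {E : Type*} [NormedAddCommGroup E] [NormedSpace ℝ E]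
    [CompleteSpace E] {C : Set (StrongDual ℝ E)}
    (hcomp : IsCompact (⇑StrongDual.toWeakDual '' C)) :
    ∃ M : ℝ, 0 < M ∧ ∀ F ∈ C, ‖F‖ ≤ M := by
  rcases C.eq_empty_or_nonempty with rfl | hne
  · exact ⟨1, one_pos, by simp⟩
  have hpt : ∀ v : E, ∃ b : ℝ, ∀ i : C, ‖(i : StrongDual ℝ E) v‖ ≤ b := by
    intro v
    have hcont : Continuous fun G : WeakDual ℝ E => ‖G v‖ :=
      (WeakDual.eval_continuous v).norm
    obtain ⟨b, hb⟩ := (hcomp.image hcont).bddAbove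
    exact ⟨b, fun i => hb ⟨_, ⟨(i : StrongDual ℝ E), i.2, rfl⟩, rfl⟩⟩
  obtain ⟨M0, hM0⟩ := banach_steinhaus (g := fun i : C => (i : StrongDual ℝ E)) hpt
  refine ⟨max M0 1, lt_of_lt_of_le one_pos (le_max_right _ _), fun F hF => ?_⟩
  exact (hM0 ⟨F, hF⟩).trans (le_max_left _ _)

end AuxLemmas

lemma infDist_le_of_wClosure {X : Type*} [NormedAddCommGroup X] [NormedSpace ℝ X]
    {D : Set X} (hD : Convex ℝ D) (x : X) {F : StrongDual ℝ (StrongDual ℝ X)}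
    (hF : F ∈ wClosure (⇑(inclusionInDoubleDual ℝ X) '' D)) :
    infDist x D ≤ ‖inclusionInDoubleDual ℝ X x - F‖ := by
  by_contra hcon
  push_neg at hcon
  set J := inclusionInDoubleDual ℝ X with hJ
  set r := infDist x D with hr
  have hr0 : 0 < r := lt_of_le_of_lt (norm_nonneg (J x - F)) hcon
  have hdisj : Disjoint (ball x r) D := by
    rw [Set.disjoint_left]
    intro y hyb hyD
    have h1 : r ≤ dist x y := infDist_le_dist_of_mem hyD
    rw [mem_ball, dist_comm] at hyb
    linarith
  obtain ⟨f, u, hf1, hf2⟩ :=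
    geometric_hahn_banach_open (convex_ball x r) isOpen_ball hD hdisj
  have hFf : u ≤ F f := by
    have hclosed : IsClosed {G : WeakDual ℝ (StrongDual ℝ X) | u ≤ G f} := by
      have : Continuous fun G : WeakDual ℝ (StrongDual ℝ X) => G f :=
        WeakDual.eval_continuous f
      exact isClosed_le continuous_const this
    have hsub : ⇑StrongDual.toWeakDual '' (⇑J '' D) ⊆
        {G : WeakDual ℝ (StrongDual ℝ X) | u ≤ G f} := by
      rintro _ ⟨_, ⟨y, hyD, rfl⟩, rfl⟩
      exact hf2 y hyD
    exact closure_minimal hsub hclosed hF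
  have hfx : f x < u := hf1 x (mem_ball_self hr0)
  set t := (‖J x - F‖ + r) / 2 with ht
  have ht1 : ‖J x - F‖ < t := by rw [ht]; linarith
  have ht2 : t < r := by rw [ht]; linarith
  have ht0 : 0 < t := lt_of_le_of_lt (norm_nonneg (J x - F)) ht1
  have hc0 : 0 ≤ (u - f x) / t := div_nonneg (by linarith) ht0.le
  have hfb : ∀ z : X, ‖z‖ = 1 → ‖f z‖ ≤ (u - f x) / t := by
    intro z hz
    have key : ∀ w : X, ‖w‖ = 1 → f w ≤ (u - f x) / t := by
      intro w hw
      have hmem : x + t • w ∈ ball x r := by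
        rw [mem_ball, dist_self_add_left, norm_smul, hw]
        simpa [abs_of_pos ht0] using ht2
      have := hf1 _ hmem
      rw [map_add, map_smul, smul_eq_mul] at this
      rw [le_div_iff₀ ht0]
      linarith
    rw [Real.norm_eq_abs, abs_le]
    refine ⟨?_, key z hz⟩
    have := key (-z) (by rwa [norm_neg])
    rw [map_neg] at this
    linarith
  have hfnorm : ‖f‖ ≤ (u - f x) / t := ContinuousLinearMap.opNorm_le_of_unit_norm hc0 hfb
  have heval : (F - J x) f = F f - f x := by
    rw [ContinuousLinearMap.sub_apply, hJ]
    simp [NormedSpace.dual_def]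
  have hb : F f - f x ≤ ‖J x - F‖ * ((u - f x) / t) := by
    rw [← heval]
    calc (F - J x) f ≤ ‖(F - J x) f‖ := le_abs_self _
      _ ≤ ‖F - J x‖ * ‖f‖ := (F - J x).le_opNorm f
      _ ≤ ‖J x - F‖ * ((u - f x) / t) := by
          rw [show ‖F - J x‖ = ‖J x - F‖ from norm_sub_rev F (J x)]
          exact mul_le_mul_of_nonneg_left hfnorm (norm_nonneg (J x - F))
  have hb2 : ‖J x - F‖ * ((u - f x) / t) < t * ((u - f x) / t) := by
    apply mul_lt_mul_of_pos_right ht1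
    apply div_pos (by linarith) ht0
  have : t * ((u - f x) / t) = u - f x := by field_simp
  linarith

/-- For a nonempty weak*-compact convex set `C ⊆ X**` of a separable Banach space `X` with
`C ∩ J(X) = ∅`, there is a nested sequence `(Cₙ)` of nonempty bounded closed convex subsets of
`X` with `C ⊆ ⋂ₙ cl_{w*}(J(Cₙ))` such that `dist(J x, C) = limₙ dist(x, Cₙ)` for all `x ∈ X`. -/
theorem bidual_distance_type_is_empty_distance_type
    {X : Type*} [NormedAddCommGroup X] [NormedSpace ℝ X] [CompleteSpace X]
    [TopologicalSpace.SeparableSpace X]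
    (C : Set (StrongDual ℝ (StrongDual ℝ X)))
    (hne : C.Nonempty) (hconv : Convex ℝ C)
    (hcomp : IsCompact (⇑StrongDual.toWeakDual '' C))
    (hdisj : C ∩ Set.range (⇑(inclusionInDoubleDual ℝ X)) = ∅) :
    ∃ D : ℕ → Set X,
      (∀ n, (D n).Nonempty) ∧ (∀ n, Bornology.IsBounded (D n)) ∧
      (∀ n, IsClosed (D n)) ∧ (∀ n, Convex ℝ (D n)) ∧ (∀ n, D (n + 1) ⊆ D n) ∧
      C ⊆ (⋂ n, wClosure (⇑(inclusionInDoubleDual ℝ X) '' D n)) ∧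
      ∀ x : X, Tendsto (fun n => infDist x (D n)) atTop
        (𝓝 (infDist (inclusionInDoubleDual ℝ X x) C)) := by
  set J := inclusionInDoubleDual ℝ X with hJdef
  have hiso : Isometry ⇑J := by
    have h := (inclusionInDoubleDualLi ℝ (E := X)).isometry
    have hco : ⇑(inclusionInDoubleDualLi ℝ (E := X)) = ⇑J := rfl
    rwa [hco] at h
  letI : LocallyConvexSpace ℝ (WeakDual ℝ (StrongDual ℝ X)) :=
    by unfold WeakDual; exact WeakBilin.locallyConvexSpace (E := StrongDual ℝ (StrongDual ℝ X)) (F := StrongDual ℝ X)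
  obtain ⟨M, hM0, hMC⟩ := bounded_of_wstar_compact hcomp
  -- dense sequence
  have hXne : Nonempty X := ⟨0⟩
  set xs : ℕ → X := TopologicalSpace.denseSeq X with hxs
  have hdense : DenseRange xs := TopologicalSpace.denseRange_denseSeq X
  -- compactness and convexity of the image of C in the weak dual
  have hCconv' : Convex ℝ (⇑StrongDual.toWeakDual '' C) := by
    have hCeq : ⇑StrongDual.toWeakDual '' C =
        ⇑(StrongDual.toWeakDual (𝕜 := ℝ) (E := StrongDual ℝ X)).toLinearMap '' C :=
      rfl
    rw [hCeq]
    exact hconv.linear_image _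
  -- separating functionals
  have hsel : ∀ p : ℕ × ℕ, ∃ (g : StrongDual ℝ X) (u : ℝ),
      (∀ F ∈ C, F g < u) ∧
      ∀ G : StrongDual ℝ (StrongDual ℝ X), G g ≤ u →
        infDist (J (xs p.1)) C - 1 / (p.2 + 1) ≤ ‖G - J (xs p.1)‖ := by
    rintro ⟨k, m⟩
    set r : ℝ := infDist (J (xs k)) C - 1 / (m + 1) with hrdef
    have hminv : (0:ℝ) < 1 / (m + 1) := by positivity
    set T : Set (WeakDual ℝ (StrongDual ℝ X)) :=
      ⇑WeakDual.toStrongDual ⁻¹' closedBall (J (xs k)) r with hT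
    have hTconv : @Convex ℝ (WeakDual ℝ (StrongDual ℝ X)) _ _ AddCommGroup.toAddCommMonoid _ T := by
      have : Convex ℝ (⇑(WeakDual.toStrongDual (𝕜 := ℝ)
          (E := StrongDual ℝ X)).toLinearMap ⁻¹' closedBall (J (xs k)) r) :=
        (convex_closedBall (J (xs k)) r).linear_preimage
          (WeakDual.toStrongDual (𝕜 := ℝ) (E := StrongDual ℝ X)).toLinearMap
      exact this
    have hTclosed : IsClosed T := WeakDual.isClosed_closedBall _ _
    have hdisjT : Disjoint (⇑StrongDual.toWeakDual '' C) T := by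
      rw [Set.disjoint_left]
      rintro _ ⟨F, hFC, rfl⟩ hFT
      have h1 : dist F (J (xs k)) ≤ r := hFT
      have h2 : infDist (J (xs k)) C ≤ dist (J (xs k)) F := infDist_le_dist_of_mem hFC
      rw [dist_comm] at h2
      rw [hrdef] at h1
      linarith
    obtain ⟨φ, u, v, hu, huv, hv⟩ :=
      geometric_hahn_banach_compact_closed (E := WeakDual ℝ (StrongDual ℝ X)) hCconv' hcomp hTconv hTclosed hdisjT
    obtain ⟨g, hg⟩ := weakDual_functional_rep φ
    refine ⟨g, u, fun F hF => ?_, fun G hG => ?_⟩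
    · have := hu _ ⟨F, hF, rfl⟩
      rwa [hg] at this
    · by_contra hcon
      push_neg at hcon
      have hGT : StrongDual.toWeakDual G ∈ T := by
        show G ∈ closedBall (J (xs k)) r
        rw [mem_closedBall]
        exact (dist_eq_norm G (J (xs k))).trans_le hcon.le
      have := hv _ hGT
      rw [hg] at this
      have : v < u := lt_of_lt_of_le this hG
      linarith
  choose gg uu hgu1 hgu2 using hsel
  set pi : ℕ → ℕ × ℕ := fun i => Denumerable.ofNat (ℕ × ℕ) i with hpi
  -- the sets
  set D : ℕ → Set X := fun n =>
    closedBall (0 : X) M ∩ ⋂ i ∈ Set.Iio n, {y : X | gg (pi i) y ≤ uu (pi i)} with hD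
  have hmemD : ∀ n (y : X), y ∈ D n ↔ (‖y‖ ≤ M ∧ ∀ i < n, gg (pi i) y ≤ uu (pi i)) := by
    intro n y
    rw [hD]
    simp only [Set.mem_inter_iff, Set.mem_iInter, Set.mem_Iio, Set.mem_setOf_eq,
      mem_closedBall, dist_zero_right]
  -- key approximation
  have hmeets : ∀ (n : ℕ) (F : StrongDual ℝ (StrongDual ℝ X)), F ∈ C →
      ∀ V : Set (WeakDual ℝ (StrongDual ℝ X)), IsOpen V →
      StrongDual.toWeakDual F ∈ V →
      ∃ y ∈ D n, StrongDual.toWeakDual (J y) ∈ V := by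
    intro n F hF V hV hFV
    set W : Set (WeakDual ℝ (StrongDual ℝ X)) :=
      ⋂ i ∈ Set.Iio n, {G : WeakDual ℝ (StrongDual ℝ X) | G (gg (pi i)) < uu (pi i)}
      with hW
    have hWopen : IsOpen W := by
      refine Set.Finite.isOpen_biInter (Set.finite_Iio n) fun i _ => ?_
      exact isOpen_lt (WeakDual.eval_continuous _) continuous_const
    have hFW : StrongDual.toWeakDual F ∈ W := by
      rw [hW]
      simp only [Set.mem_iInter, Set.mem_setOf_eq]
      intro i _
      exact hgu1 (pi i) F hF
    have hgold := goldstine hM0 F (hMC F hF)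
    rw [_root_.mem_closure_iff] at hgold
    obtain ⟨z, hzVW, hzimg⟩ := hgold (V ∩ W) (hV.inter hWopen) ⟨hFV, hFW⟩
    obtain ⟨_, ⟨y, hyball, rfl⟩, rfl⟩ := hzimg
    refine ⟨y, ?_, hzVW.1⟩
    rw [hmemD]
    refine ⟨by simpa [dist_zero_right] using hyball, fun i hi => ?_⟩
    have := hzVW.2
    rw [hW] at this
    simp only [Set.mem_iInter, Set.mem_setOf_eq] at this
    have h2 := this i hi
    exact h2.le
  -- nonemptiness
  obtain ⟨F₀, hF₀⟩ := id hne
  have hDne : ∀ n, (D n).Nonempty := by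
    intro n
    obtain ⟨y, hy, -⟩ := hmeets n F₀ hF₀ Set.univ isOpen_univ (Set.mem_univ _)
    exact ⟨y, hy⟩
  -- closure containment
  have hCsub : ∀ n, C ⊆ wClosure (⇑J '' D n) := by
    intro n F hF
    show StrongDual.toWeakDual F ∈ closure (⇑StrongDual.toWeakDual '' (⇑J '' D n))
    rw [_root_.mem_closure_iff]
    intro V hV hFV
    obtain ⟨y, hyD, hyV⟩ := hmeets n F hF V hV hFV
    exact ⟨_, hyV, ⟨J y, ⟨y, hyD, rfl⟩, rfl⟩⟩
  -- convexity
  have hDconv : ∀ n, Convex ℝ (D n) := by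
    intro n
    refine (convex_closedBall _ _).inter (convex_iInter₂ fun i _ => ?_)
    exact convex_halfSpace_le ⟨fun a b => map_add _ a b, fun c a => map_smul _ c a⟩ _
  refine ⟨D, hDne, ?_, ?_, hDconv, ?_, ?_, ?_⟩
  · intro n
    exact (isBounded_closedBall).subset (by rw [hD]; exact Set.inter_subset_left)
  · intro n
    rw [hD]
    exact Metric.isClosed_closedBall.inter (isClosed_biInter fun i _ =>
      isClosed_le (gg (pi i)).continuous continuous_const)
  · intro n y hy
    rw [hmemD] at hy ⊢
    exact ⟨hy.1, fun i hi => hy.2 i (Nat.lt_succ_of_lt hi)⟩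
  · intro F hF
    exact Set.mem_iInter.2 fun n => hCsub n hF
  · -- the limit
    intro x
    set Lx : ℝ := infDist (J x) C with hLx
    have hupper : ∀ n, infDist x (D n) ≤ Lx := by
      intro n
      refine le_infDist_of_forall hne fun F hF => ?_
      have := infDist_le_of_wClosure (hDconv n) x (hCsub n hF)
      exact this.trans_eq (dist_eq_norm (J x) F).symm
    have hlower : ∀ ε : ℝ, 0 < ε → ∃ N, ∀ n ≥ N, Lx - ε ≤ infDist x (D n) := by
      intro ε hε
      obtain ⟨k, hk⟩ := Metric.denseRange_iff.1 hdense x (ε / 3) (by linarith)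
      obtain ⟨m, hm⟩ := exists_nat_one_div_lt (K := ℝ) (show (0:ℝ) < ε / 3 by linarith)
      refine ⟨Encodable.encode (k, m) + 1, fun n hn => ?_⟩
      have hidx : Encodable.encode (k, m) < n := hn
      have hky : ∀ y ∈ D n, infDist (J (xs k)) C - 1 / (m + 1) ≤ dist (xs k) y := by
        intro y hy
        rw [hmemD] at hy
        have hcons := hy.2 _ hidx
        have hpieq : pi (Encodable.encode (k, m)) = (k, m) := by
          rw [hpi]; exact Denumerable.ofNat_encode _
        rw [hpieq] at hcons
        have h2 : (J y) (gg (k, m)) ≤ uu (k, m) := hcons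
        have h4 := hgu2 (k, m) (J y) h2
        have h5 : ‖J y - J (xs k)‖ = dist (xs k) y := by
          rw [← (dist_eq_norm (J y) (J (xs k))), hiso.dist_eq, dist_comm]
        rw [h5] at h4
        exact h4
      have h6 : infDist (J (xs k)) C - 1 / (m + 1) ≤ infDist (xs k) (D n) :=
        le_infDist_of_forall (hDne n) hky
      have h7 : Lx - ε / 3 ≤ infDist (J (xs k)) C := by
        have h7a : Lx ≤ infDist (J (xs k)) C + dist (J x) (J (xs k)) :=
          infDist_le_infDist_add_dist
        rw [hiso.dist_eq] at h7a
        linarith [hk]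
      have h8 : infDist (xs k) (D n) - dist x (xs k) ≤ infDist x (D n) := by
        have := infDist_le_infDist_add_dist (x := xs k) (y := x) (s := D n)
        rw [dist_comm] at this
        linarith [infDist_le_infDist_add_dist (x := x) (y := xs k) (s := D n)]
      have h9 : (1:ℝ) / (m + 1) < ε / 3 := hm
      have h10 : dist x (xs k) < ε / 3 := hk
      linarith
    rw [Metric.tendsto_atTop]
    intro ε hε
    obtain ⟨N, hN⟩ := hlower (ε / 2) (by linarith)
    refine ⟨N, fun n hn => ?_⟩
    have h1 := hupper n
    have h2 := hN n hn
    rw [Real.dist_eq, abs_lt]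
    constructor <;> [linarith; linarith]
end

section
/- Let X be a finite-dimensional real normed space and let (A_n)_{n∈ℕ} be a sequence of unbounded connected subsets of X. Then either ⋂_{n∈ℕ} A_n = ∅, or there is k₀ ∈ ℕ such that for every k ≥ k₀ and every ε > 0 there exists an infinite subset N_k ⊆ ℕ with T_k ∩ ⋂_{n∈N_k} A_n^ε ≠ ∅, where T_k = {x ∈ X : k ≤ ‖x‖ ≤ k+1}. -/
open Metric

/-- The `ε`-enlargement of a set `A`: points at distance at most `ε` from `A`. -/
def enl {X : Type*} [NormedAddCommGroup X] (A : Set X) (ε : ℝ) : Set X :=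
  {x : X | infDist x A ≤ ε}

/-- For a sequence of unbounded connected sets `(Aₙ)` in a finite-dimensional normed space,
either `⋂ₙ Aₙ = ∅`, or for all but finitely many `k` and every `ε > 0` there is an infinite
`N ⊆ ℕ` such that the annulus `T_k = {k ≤ ‖x‖ ≤ k+1}` meets `⋂_{n ∈ N} Aₙ^ε`. -/
theorem annulus_meets_enlargements_of_unbounded_connected
    {X : Type*} [NormedAddCommGroup X] [NormedSpace ℝ X] [FiniteDimensional ℝ X]
    (A : ℕ → Set X) (hconn : ∀ n, IsConnected (A n))
    (hunb : ∀ n, ¬ Bornology.IsBounded (A n)) :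
    (⋂ n, A n) = ∅ ∨
      ∃ k₀ : ℕ, ∀ k : ℕ, k₀ ≤ k → ∀ ε : ℝ, 0 < ε →
        ∃ N : Set ℕ, N.Infinite ∧
          ({x : X | (k : ℝ) ≤ ‖x‖ ∧ ‖x‖ ≤ (k : ℝ) + 1} ∩ ⋂ n ∈ N, enl (A n) ε).Nonempty := by
  rcases Set.eq_empty_or_nonempty (⋂ n, A n) with h | ⟨x₀, hx₀⟩
  · exact Or.inl h
  right
  simp only [Set.mem_iInter] at hx₀
  refine ⟨⌈‖x₀‖⌉₊, fun k hk ε hε => ?_⟩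
  have hx₀k : ‖x₀‖ ≤ (k : ℝ) := le_trans (Nat.le_ceil _) (by exact_mod_cast hk)
  -- choose a point of norm exactly k in each A n
  have hpick : ∀ n, ∃ a ∈ A n, ‖a‖ = (k : ℝ) := by
    intro n
    have himg : IsConnected ((fun x : X => ‖x‖) '' A n) :=
      (hconn n).image _ continuous_norm.continuousOn
    have hbig : ∃ a ∈ A n, (k : ℝ) < ‖a‖ := by
      by_contra h
      push_neg at h
      exact hunb n (isBounded_iff_forall_norm_le.2 ⟨k, fun x hx => h x hx⟩)
    obtain ⟨b, hb, hbk⟩ := hbig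
    have hoc := himg.isPreconnected.ordConnected
    have : (k : ℝ) ∈ (fun x : X => ‖x‖) '' A n := by
      have h1 : ‖x₀‖ ∈ (fun x : X => ‖x‖) '' A n := ⟨x₀, hx₀ n, rfl⟩
      have h2 : ‖b‖ ∈ (fun x : X => ‖x‖) '' A n := ⟨b, hb, rfl⟩
      exact hoc.out h1 h2 ⟨hx₀k, hbk.le⟩
    obtain ⟨a, ha, hak⟩ := this
    exact ⟨a, ha, hak⟩
  choose a ha hak using hpick
  -- compactness of the annulus
  have hTsub : ∀ n, a n ∈ closedBall (0 : X) (k + 1) := by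
    intro n
    simp only [mem_closedBall, dist_zero_right, hak n]
    linarith
  obtain ⟨x, hx, φ, hφ, hlim⟩ :=
    (isCompact_closedBall (0 : X) (k + 1)).tendsto_subseq hTsub
  have hεev : ∀ᶠ j in Filter.atTop, dist (a (φ j)) x ≤ ε := by
    have := Metric.tendsto_atTop.1 hlim ε hε
    obtain ⟨J, hJ⟩ := this
    exact Filter.eventually_atTop.2 ⟨J, fun j hj => (hJ j hj).le⟩
  obtain ⟨J, hJ⟩ := Filter.eventually_atTop.1 hεev
  refine ⟨{n | dist (a n) x ≤ ε}, ?_, ?_⟩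
  · apply Set.infinite_of_injective_forall_mem
      (f := fun j : ℕ => φ (J + j))
    · intro i j hij
      have := hφ.injective hij
      omega
    · intro j
      exact hJ (J + j) (Nat.le_add_right J j)
  · -- the cluster point x lies in the annulus and in all enlargements
    have hxnorm : ‖x‖ = (k : ℝ) := by
      have : Filter.Tendsto (fun j => ‖a (φ j)‖) Filter.atTop (nhds ‖x‖) :=
        (continuous_norm.tendsto x).comp hlim
      have hconst : (fun j => ‖a (φ j)‖) = fun _ => (k : ℝ) := by
        funext j; exact hak (φ j)
      rw [hconst] at this
      exact (tendsto_nhds_unique tendsto_const_nhds this).symm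
    refine ⟨x, ⟨le_of_eq hxnorm.symm, by rw [hxnorm]; linarith⟩, ?_⟩
    simp only [Set.mem_iInter, enl, Set.mem_setOf_eq]
    intro n hn
    calc infDist x (A n) ≤ dist x (a n) := infDist_le_dist_of_mem (ha n)
      _ ≤ ε := by rw [dist_comm]; exact hn
end

section
/- Let X be a finite-dimensional real normed space and let (A_n)_{n∈ℕ} be a nested sequence (A_{n+1} ⊆ A_n for all n) of unbounded connected subsets of X. Then either ⋂_{n∈ℕ} A_n = ∅, or for every ε > 0 the set ⋂_{n∈ℕ} A_n^ε is unbounded. -/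
open Metric

/-- For a nested sequence of unbounded connected sets `(Aₙ)` in a finite-dimensional normed
space, either `⋂ₙ Aₙ = ∅`, or `⋂ₙ Aₙ^ε` is unbounded for every `ε > 0`. -/
theorem iInter_enlargement_unbounded_of_nested_unbounded_connected
    {X : Type*} [NormedAddCommGroup X] [NormedSpace ℝ X] [FiniteDimensional ℝ X]
    (A : ℕ → Set X) (hconn : ∀ n, IsConnected (A n))
    (hunb : ∀ n, ¬ Bornology.IsBounded (A n))
    (hnest : ∀ n, A (n + 1) ⊆ A n) :
    (⋂ n, A n) = ∅ ∨
      ∀ ε : ℝ, 0 < ε → ¬ Bornology.IsBounded (⋂ n, enl (A n) ε) := by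
  rcases Set.eq_empty_or_nonempty (⋂ n, A n) with h | ⟨x₀, hx₀⟩
  · exact Or.inl h
  right
  intro ε hε hbdd
  obtain ⟨R, hR⟩ := hbdd.subset_closedBall x₀
  set R' : ℝ := max R 0 + 1 with hR'def
  have hRR' : R < R' := lt_of_le_of_lt (le_max_left R 0) (by simp [hR'def])
  have hR'pos : 0 < R' := lt_of_le_of_lt (le_max_right R 0) (by simp [hR'def])
  have hanti : Antitone A := antitone_nat_of_succ_le hnest
  -- each Aₙ meets the sphere of radius R' around x₀
  have key : ∀ n, ∃ y ∈ A n, dist y x₀ = R' := by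
    intro n
    have hx₀n : x₀ ∈ A n := Set.mem_iInter.mp hx₀ n
    obtain ⟨y, hy, hyR⟩ : ∃ y ∈ A n, R' < dist y x₀ := by
      by_contra hcon
      push_neg at hcon
      exact hunb n ((isBounded_closedBall (x := x₀) (r := R')).subset
        (fun y hy => mem_closedBall.mpr (hcon y hy)))
    have hcont : ContinuousOn (fun z => dist z x₀) (A n) :=
      (continuous_id.dist continuous_const).continuousOn
    have hiv := (hconn n).isPreconnected.intermediate_value hx₀n hy hcont
    have : R' ∈ Set.Icc (dist x₀ x₀) (dist y x₀) := by
      constructor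
      · simpa using hR'pos.le
      · exact hyR.le
    obtain ⟨z, hz, hz'⟩ := hiv this
    exact ⟨z, hz, hz'⟩
  choose x hxA hxd using key
  have hxs : ∀ n, x n ∈ sphere x₀ R' := fun n => mem_sphere.mpr (hxd n)
  obtain ⟨z, hzs, φ, hφ, hlim⟩ := (isCompact_sphere x₀ R').tendsto_subseq hxs
  have hzmem : z ∈ ⋂ n, enl (A n) ε := by
    rw [Set.mem_iInter]
    intro m
    have hcl : z ∈ closure (A m) := by
      refine mem_closure_of_tendsto hlim ?_
      filter_upwards [Filter.eventually_ge_atTop m] with k hk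
      exact hanti (le_trans hk (hφ.le_apply)) (hxA (φ k))
    have : infDist z (A m) = 0 := by
      rw [← Metric.infDist_closure]
      exact Metric.infDist_zero_of_mem hcl
    simp [enl, this, hε.le]
  have := hR hzmem
  rw [mem_closedBall, mem_sphere.mp hzs] at this
  exact absurd this (not_le.mpr hRR')
end

section
/- In the real space ℓ¹ = ℓ¹({k∈ℕ : k ≥ 1};ℝ), for each integer k ≥ 1 define B_k = {x ∈ ℓ¹ : x_k ≥ 1} and D_k = {x ∈ ℓ¹ : x_k ≤ −(2^k − 1)/2^k}. Then for every ε with 0 ≤ ε < 1, the intersection of all the ε-enlargements, (⋂_{k≥1} B_k^ε) ∩ (⋂_{k≥1} D_k^ε), is empty; in particular (⋂_{k≥1} B_k) ∩ (⋂_{k≥1} D_k) = ∅. -/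
open Metric

lemma coord_le_of_lower_bound {s : Set (lp (fun _ : ℕ+ => ℝ) 1)} {x : lp (fun _ : ℕ+ => ℝ) 1}
    {c ε : ℝ} (hne : s.Nonempty) (h : ∀ y ∈ s, c ≤ dist x y) (hinf : infDist x s ≤ ε) :
    c ≤ ε := by
  by_contra hlt
  push_neg at hlt
  obtain ⟨y, hy, hdy⟩ := (infDist_lt_iff hne).mp (lt_of_le_of_lt hinf hlt)
  exact absurd (h y hy) (not_le.mpr hdy)

/-- In `ℓ¹` (indexed by the positive integers), with `B_k = {x : x_k ≥ 1}` and
`D_k = {x : x_k ≤ -(2^k - 1)/2^k}`, for every `0 ≤ ε < 1` the intersection of all the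
`ε`-enlargements is empty; in particular `(⋂ₖ B_k) ∩ (⋂ₖ D_k) = ∅`. -/
theorem l1_example_enlargements_empty_inter :
    let B : ℕ+ → Set (lp (fun _ : ℕ+ => ℝ) 1) := fun k => {x | 1 ≤ x k}
    let D : ℕ+ → Set (lp (fun _ : ℕ+ => ℝ) 1) :=
      fun k => {x | x k ≤ -((2 ^ (k : ℕ) - 1) / 2 ^ (k : ℕ))}
    (∀ ε : ℝ, 0 ≤ ε → ε < 1 →
      ((⋂ k, enl (B k) ε) ∩ ⋂ k, enl (D k) ε) = ∅) ∧
    ((⋂ k, B k) ∩ ⋂ k, D k) = ∅ := by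
  intro B D
  have main : ∀ ε : ℝ, 0 ≤ ε → ε < 1 →
      ((⋂ k, enl (B k) ε) ∩ ⋂ k, enl (D k) ε) = ∅ := by
    intro ε hε0 hε1
    ext x
    simp only [Set.mem_inter_iff, Set.mem_iInter, Set.mem_empty_iff_false, iff_false, not_and]
    intro hB hD
    obtain ⟨n, hn⟩ := exists_pow_lt_of_lt_one (by linarith : (0:ℝ) < 2 - 2*ε)
      (by norm_num : (1/2 : ℝ) < 1)
    set k : ℕ+ := ⟨n + 1, n.succ_pos⟩ with hk
    set c : ℝ := ((2:ℝ) ^ (k : ℕ) - 1) / 2 ^ (k : ℕ) with hc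
    have h2k : (0:ℝ) < 2 ^ (k : ℕ) := by positivity
    -- lower bound from B k
    have hxB : 1 - x k ≤ ε := by
      refine coord_le_of_lower_bound ⟨lp.single 1 k 1, ?_⟩ ?_ (hB k)
      · simp [B, lp.single_apply]
      · intro y hy
        have h1 : ‖(x - y) k‖ ≤ ‖x - y‖ := lp.norm_apply_le_norm one_ne_zero (x - y) k
        have h2 : ((x - y) : ∀ i : ℕ+, ℝ) k = x k - y k := by
          simp
        rw [dist_eq_norm]
        have hy' : 1 ≤ y k := hy
        calc 1 - x k ≤ y k - x k := by linarith
          _ ≤ |x k - y k| := by rw [abs_sub_comm]; exact le_abs_self _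
          _ = ‖((x - y) : lp (fun _ : ℕ+ => ℝ) 1) k‖ := by
                rw [show ((x - y) : lp (fun _ : ℕ+ => ℝ) 1) k = x k - y k from by simp]
                exact (Real.norm_eq_abs _).symm
          _ ≤ ‖x - y‖ := h1
    -- lower bound from D k
    have hxD : x k + c ≤ ε := by
      refine coord_le_of_lower_bound ⟨lp.single 1 k (-c), ?_⟩ ?_ (hD k)
      · simp [D, lp.single_apply, hc]
      · intro y hy
        have h1 : ‖(x - y) k‖ ≤ ‖x - y‖ := lp.norm_apply_le_norm one_ne_zero (x - y) k
        have h2 : ((x - y) : ∀ i : ℕ+, ℝ) k = x k - y k := by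
          simp
        rw [dist_eq_norm]
        have hy' : y k ≤ -c := hy
        calc x k + c ≤ x k - y k := by linarith
          _ ≤ |x k - y k| := le_abs_self _
          _ = ‖((x - y) : lp (fun _ : ℕ+ => ℝ) 1) k‖ := by
                rw [show ((x - y) : lp (fun _ : ℕ+ => ℝ) 1) k = x k - y k from by simp]
                exact (Real.norm_eq_abs _).symm
          _ ≤ ‖x - y‖ := h1
    -- arithmetic contradiction
    have hcval : c = 1 - (1/2 : ℝ) ^ (k : ℕ) := by
      rw [hc, div_pow, one_pow, sub_div, div_self (ne_of_gt h2k)]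
    have hpow : ((1:ℝ)/2) ^ ((k : ℕ)) ≤ (1/2 : ℝ) ^ n := by
      apply pow_le_pow_of_le_one (by norm_num) (by norm_num)
      simp [hk]
    rw [hcval] at hxD
    linarith
  refine ⟨main, ?_⟩
  have hsub : ((⋂ k, B k) ∩ ⋂ k, D k) ⊆ ((⋂ k, enl (B k) 0) ∩ ⋂ k, enl (D k) 0) := by
    rintro x ⟨hB, hD⟩
    simp only [Set.mem_iInter] at hB hD ⊢
    constructor
    · exact Set.mem_iInter.mpr fun k => le_of_eq (infDist_zero_of_mem (hB k))
    · exact Set.mem_iInter.mpr fun k => le_of_eq (infDist_zero_of_mem (hD k))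
  rw [main 0 le_rfl one_pos] at hsub
  exact Set.subset_empty_iff.mp hsub
end

section
/- In the real space ℓ¹ = ℓ¹({k∈ℕ : k ≥ 1};ℝ), for each integer k ≥ 1 define B_k = {x ∈ ℓ¹ : x_k ≥ 1} and D_k = {x ∈ ℓ¹ : x_k ≤ −(2^k − 1)/2^k}. Then for every ε > 0 the set (⋂_{k≥1} B_k^{1+ε}) ∩ (⋂_{k≥1} D_k^{1+ε}) is unbounded; indeed it contains every x ∈ ℓ¹ with −ε ≤ x_k ≤ 0 for all k ≥ 1. -/
open Metric
open scoped ENNReal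

lemma coord_infDist_le (x : lp (fun _ : ℕ+ => ℝ) 1) (k : ℕ+) (c : ℝ)
    (S : Set (lp (fun _ : ℕ+ => ℝ) 1)) (hS : ∀ y : lp (fun _ : ℕ+ => ℝ) 1, y k = c → y ∈ S) :
    Metric.infDist x S ≤ |c - x k| := by
  set y := x + lp.single 1 k (c - x k) with hy
  have hyk : y k = c := by
    rw [hy, lp.coeFn_add, Pi.add_apply, lp.single_apply_self]; ring
  have h1 : Metric.infDist x S ≤ dist x y := Metric.infDist_le_dist_of_mem (hS y hyk)
  have h2 : dist x y = ‖(lp.single 1 k (c - x k) : lp (fun _ : ℕ+ => ℝ) 1)‖ := by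
    rw [dist_eq_norm, hy, sub_add_cancel_left, norm_neg]
  have hp : 0 < (1 : ℝ≥0∞).toReal := by norm_num
  have h3 : ‖(lp.single 1 k (c - x k) : lp (fun _ : ℕ+ => ℝ) 1)‖ = ‖c - x k‖ :=
    lp.norm_single (p := 1) (E := fun _ : ℕ+ => ℝ) (by norm_num) k (c - x k)
  calc Metric.infDist x S ≤ dist x y := h1
    _ = |c - x k| := by rw [h2, h3, Real.norm_eq_abs]

/-- In `ℓ¹` (indexed by the positive integers), with `B_k = {x : x_k ≥ 1}` and
`D_k = {x : x_k ≤ -(2^k - 1)/2^k}`, for every `ε > 0` the intersection of all the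
`(1+ε)`-enlargements contains every `x` with `-ε ≤ x_k ≤ 0` for all `k`, and is unbounded. -/
theorem l1_example_one_plus_eps_enlargements_unbounded :
    let B : ℕ+ → Set (lp (fun _ : ℕ+ => ℝ) 1) := fun k => {x | 1 ≤ x k}
    let D : ℕ+ → Set (lp (fun _ : ℕ+ => ℝ) 1) :=
      fun k => {x | x k ≤ -((2 ^ (k : ℕ) - 1) / 2 ^ (k : ℕ))}
    ∀ ε : ℝ, 0 < ε →
      (∀ x : lp (fun _ : ℕ+ => ℝ) 1, (∀ k : ℕ+, -ε ≤ x k ∧ x k ≤ 0) →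
        x ∈ (⋂ k, enl (B k) (1 + ε)) ∩ ⋂ k, enl (D k) (1 + ε)) ∧
      ¬ Bornology.IsBounded ((⋂ k, enl (B k) (1 + ε)) ∩ ⋂ k, enl (D k) (1 + ε)) := by
  intro B D ε hε
  have hmem : ∀ x : lp (fun _ : ℕ+ => ℝ) 1, (∀ k : ℕ+, -ε ≤ x k ∧ x k ≤ 0) →
      x ∈ (⋂ k, enl (B k) (1 + ε)) ∩ ⋂ k, enl (D k) (1 + ε) := by
    intro x hx
    constructor
    · refine Set.mem_iInter.mpr fun k => ?_
      have h := coord_infDist_le x k 1 (B k) (fun y hy => by simp [B, hy])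
      have hxk := hx k
      have : |1 - x k| ≤ 1 + ε := by
        rw [abs_le]; constructor <;> nlinarith [hxk.1, hxk.2]
      exact le_trans h this
    · refine Set.mem_iInter.mpr fun k => ?_
      set c : ℝ := -((2 ^ (k : ℕ) - 1) / 2 ^ (k : ℕ)) with hc
      have h := coord_infDist_le x k c (D k) (fun y hy => by simp [D, hy, hc])
      have hxk := hx k
      have hpow : (1 : ℝ) ≤ 2 ^ (k : ℕ) := one_le_pow₀ (by norm_num)
      have hc1 : -1 ≤ c := by
        rw [hc, neg_le, neg_neg]
        exact div_le_one_of_le₀ (by linarith) (by positivity)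
      have hc0 : c ≤ 0 := by
        rw [hc, neg_nonpos]
        exact div_nonneg (by linarith) (by positivity)
      have : |c - x k| ≤ 1 + ε := by
        rw [abs_le]; constructor <;> nlinarith [hxk.1, hxk.2]
      exact le_trans h this
  refine ⟨hmem, fun hb => ?_⟩
  obtain ⟨r, hr⟩ := isBounded_iff_forall_norm_le.mp hb
  obtain ⟨N, hN⟩ := exists_nat_gt (r / ε)
  set s : Finset ℕ+ := Finset.Icc 1 ⟨N + 1, Nat.succ_pos N⟩ with hs
  set xN : lp (fun _ : ℕ+ => ℝ) 1 := ∑ i ∈ s, lp.single 1 i (-ε) with hxN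
  have hcoord : ∀ k : ℕ+, xN k = if k ∈ s then -ε else 0 := by
    intro k
    rw [hxN]
    simp only [lp.coeFn_sum, Finset.sum_apply, lp.single_apply, Finset.sum_dite_eq, Finset.sum_pi_single]
  have hmemN : xN ∈ (⋂ k, enl (B k) (1 + ε)) ∩ ⋂ k, enl (D k) (1 + ε) := by
    refine hmem xN fun k => ?_
    rw [hcoord k]
    constructor <;> split <;> linarith
  have hp : 0 < (1 : ℝ≥0∞).toReal := by norm_num
  have hnorm : ‖xN‖ = (N + 1 : ℕ) * ε := by
    have h := lp.norm_sum_single (p := 1) (E := fun _ : ℕ+ => ℝ) hp (fun _ => -ε) s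
    simp only [ENNReal.toReal_one, Real.rpow_one, Real.norm_eq_abs, abs_neg,
      abs_of_pos hε, Finset.sum_const, nsmul_eq_mul] at h
    rw [← hxN] at h
    have hcard : s.card = N + 1 := by
      rw [hs]
      exact (PNat.card_Icc ..).trans (by simp)
    rw [hcard] at h
    exact h
  have h5 := hr xN hmemN
  rw [hnorm] at h5
  have h6 : r / ε < ((N + 1 : ℕ) : ℝ) := by push_cast; linarith
  rw [div_lt_iff₀ hε] at h6
  linarith
end
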